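/- arXiv:2404.02069 — 5 statements merged into one kernel-verified Lean document; each statement's English description precedes it below -/
import Mathlib

section
/- Let n = n_1 + … + n_p with n_1,…,n_p nonnegative integers (p ≥ 1), and let A be a subset of ℕ^n. Then there exists a numerical polynomial ω_A(t_1,…,t_p) in p variables such that: (i) ω_A(r_1,…,r_p) = Card V_A(r_1,…,r_p) for all sufficiently large (r_1,…,r_p) ∈ ℕ^p (i.e., there exists (s_1,…,s_p) ∈ ℕ^p such that the equality holds whenever r_i ≥ s_i for all i); and (ii) the total degree of ω_A is at most n and deg_{t_i} ω_A ≤ n_i for i = 1,…,p. -/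
open MvPolynomial

/-- A polynomial in `p` variables with rational coefficients is numerical if it takes
integer values for all sufficiently large integer arguments. -/
def IsNumerical {p : ℕ} (f : MvPolynomial (Fin p) ℚ) : Prop :=
  ∃ s : Fin p → ℤ, ∀ r : Fin p → ℤ, (∀ i, s i ≤ r i) →
    ∃ z : ℤ, MvPolynomial.eval (fun i => (r i : ℚ)) f = (z : ℚ)

/-- The binomial-coefficient polynomial `C(t_j + c, k)` in the variable `t_j`. -/
noncomputable def binomShift {p : ℕ} (j : Fin p) (c : ℤ) (k : ℕ) : MvPolynomial (Fin p) ℚ :=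
  (k.factorial : ℚ)⁻¹ • ∏ l ∈ Finset.range k, (X j + MvPolynomial.C ((c : ℚ) - (l : ℚ)))

/-- The sum of the entries of `v` over the `j`-th block of the partition `B`. -/
def blockSum {n p : ℕ} (B : Fin n → Fin p) (v : Fin n → ℕ) (j : Fin p) : ℕ :=
  ∑ i ∈ Finset.univ.filter (fun i => B i = j), v i

/-- `V_A`: the set of points of `ℕ^n` that are not ≥ (componentwise) any element of `A`. -/
def VSet {n : ℕ} (A : Set (Fin n → ℕ)) : Set (Fin n → ℕ) :=
  {v | ∀ a ∈ A, ¬ a ≤ v}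

/-! ### Auxiliary counting lemmas -/

lemma countFun (α : Type*) [Fintype α] [DecidableEq α] (m : ℕ) :
    Nat.card {w : α → ℕ // ∑ a, w a ≤ m} = (m + Fintype.card α).choose (Fintype.card α) := by
  have e : {w : α → ℕ // ∑ a, w a ≤ m} ≃ Sym (Option α) m := by
    refine ⟨fun w => ⟨(∑ a : α, Multiset.replicate (w.1 a) (some a)) +
        Multiset.replicate (m - ∑ a, w.1 a) none, ?_⟩,
      fun μ => ⟨fun a => μ.1.count (some a), ?_⟩, ?_, ?_⟩
    · have hc : Multiset.card (∑ a : α, Multiset.replicate (w.1 a) (some a) : Multiset (Option α))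
          = ∑ a : α, w.1 a := by
        rw [Multiset.card_sum]
        simp
      simp only [Multiset.card_add, hc, Multiset.card_replicate]
      omega
    · have h1 : ∑ b : Option α, μ.1.count b = m := by
        rw [Multiset.sum_count_eq_card (fun a _ => Finset.mem_univ a)]
        exact μ.2
      rw [Fintype.sum_option] at h1
      show ∑ a : α, μ.1.count (some a) ≤ m
      omega
    · rintro ⟨w, hw⟩
      ext a
      simp only [Multiset.count_add, Multiset.count_sum', Multiset.count_replicate]
      simp [Finset.sum_ite_eq']
    · rintro ⟨μ, hμ⟩
      have h1 : ∑ b : Option α, μ.count b = m := by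
        rw [Multiset.sum_count_eq_card (fun a _ => Finset.mem_univ a)]
        exact hμ
      rw [Fintype.sum_option] at h1
      apply Subtype.ext
      apply Multiset.ext.2
      intro b
      simp only [Multiset.count_add, Multiset.count_sum', Multiset.count_replicate]
      cases b with
      | none => simp; omega
      | some a => simp [Finset.sum_ite_eq']
  rw [Nat.card_congr e, Nat.card_eq_fintype_card, Sym.card_sym_eq_choose, Fintype.card_option]
  have : Fintype.card α + 1 + m - 1 = m + Fintype.card α := by omega
  rw [this, Nat.choose_symm_add]

lemma blockSum_eq_subtype {n p : ℕ} (B : Fin n → Fin p) (v : Fin n → ℕ) (j : Fin p) :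
    blockSum B v j = ∑ i : {i // B i = j}, v i.1 := by
  rw [blockSum, ← Finset.sum_subtype (Finset.univ.filter (fun i => B i = j))
    (fun i => by simp) v]

lemma blockSum_add {n p : ℕ} (B : Fin n → Fin p) (v w : Fin n → ℕ) (j : Fin p) :
    blockSum B (fun i => v i + w i) j = blockSum B v j + blockSum B w j :=
  Finset.sum_add_distrib

lemma countBlocks {n p : ℕ} (B : Fin n → Fin p) (nn : Fin p → ℕ)
    (hBcard : ∀ j, (Finset.univ.filter fun i => B i = j).card = nn j) (m : Fin p → ℕ) :
    Nat.card {v : Fin n → ℕ // ∀ j, blockSum B v j ≤ m j} =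
      ∏ j, (m j + nn j).choose (nn j) := by
  classical
  have e : {v : Fin n → ℕ // ∀ j, blockSum B v j ≤ m j} ≃
      ∀ j, {w : {i // B i = j} → ℕ // ∑ i, w i ≤ m j} := by
    refine ⟨fun v j => ⟨fun i => v.1 i.1, by rw [← blockSum_eq_subtype]; exact v.2 j⟩,
      fun W => ⟨fun i => (W (B i)).1 ⟨i, rfl⟩, fun j => ?_⟩, fun v => rfl, fun W => ?_⟩
    · rw [blockSum_eq_subtype]
      have : ∀ i : {i // B i = j}, (W (B i.1)).1 ⟨i.1, rfl⟩ = (W j).1 i := by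
        rintro ⟨i, hi⟩
        subst hi
        rfl
      rw [Finset.sum_congr rfl (fun i _ => this i)]
      exact (W j).2
    · funext j
      apply Subtype.ext
      funext i
      obtain ⟨i, hi⟩ := i
      subst hi
      rfl
  rw [Nat.card_congr e, Nat.card_pi]
  refine Finset.prod_congr rfl fun j _ => ?_
  rw [countFun, Fintype.card_subtype, hBcard]

lemma countShift {n p : ℕ} (B : Fin n → Fin p) (nn : Fin p → ℕ)
    (hBcard : ∀ j, (Finset.univ.filter fun i => B i = j).card = nn j)
    (b : Fin n → ℕ) (r : Fin p → ℕ) (hb : ∀ j, blockSum B b j ≤ r j) :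
    Nat.card {v : Fin n → ℕ // b ≤ v ∧ ∀ j, blockSum B v j ≤ r j} =
      ∏ j, (r j - blockSum B b j + nn j).choose (nn j) := by
  have key : ∀ v : Fin n → ℕ, b ≤ v →
      ∀ j, blockSum B v j = blockSum B (fun i => v i - b i) j + blockSum B b j := by
    intro v hv j
    rw [← blockSum_add]
    congr 1
    funext i
    exact (Nat.sub_add_cancel (hv i)).symm
  have e : {v : Fin n → ℕ // b ≤ v ∧ ∀ j, blockSum B v j ≤ r j} ≃
      {w : Fin n → ℕ // ∀ j, blockSum B w j ≤ r j - blockSum B b j} := by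
    refine ⟨fun v => ⟨fun i => v.1 i - b i, fun j => ?_⟩,
      fun w => ⟨fun i => w.1 i + b i, fun i => Nat.le_add_left _ _, fun j => ?_⟩, ?_, ?_⟩
    · have := key v.1 v.2.1 j
      have h2 := v.2.2 j
      omega
    · rw [blockSum_add]
      have := w.2 j
      have := hb j
      omega
    · rintro ⟨v, hv, h⟩
      apply Subtype.ext
      funext i
      exact Nat.sub_add_cancel (hv i)
    · rintro ⟨w, hw⟩
      apply Subtype.ext
      funext i
      simp
  rw [Nat.card_congr e, countBlocks B nn hBcard]

/-! ### Binomial polynomial lemmas -/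

lemma prod_cast_sub (m k : ℕ) :
    ∏ l ∈ Finset.range k, ((m : ℚ) - l) = (m.descFactorial k : ℚ) := by
  induction k with
  | zero => simp
  | succ k ih =>
    rw [Finset.prod_range_succ, ih, Nat.descFactorial_succ]
    by_cases h : k ≤ m
    · push_cast [Nat.cast_sub h]
      ring
    · rw [Nat.descFactorial_of_lt (by omega)]
      push_cast
      ring

lemma eval_binomShift {p : ℕ} (j : Fin p) (c : ℤ) (k : ℕ) (x : Fin p → ℚ) :
    MvPolynomial.eval x (binomShift j c k) =
      (k.factorial : ℚ)⁻¹ * ∏ l ∈ Finset.range k, (x j + ((c : ℚ) - l)) := by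
  simp [binomShift, smul_eq_C_mul, map_prod]

lemma eval_binomShift_nat {p : ℕ} (j : Fin p) (c : ℤ) (k : ℕ) (r : Fin p → ℕ) (m : ℕ)
    (hm : (r j : ℤ) + c = (m : ℤ)) :
    MvPolynomial.eval (fun i => ((r i : ℤ) : ℚ)) (binomShift j c k) = (m.choose k : ℚ) := by
  rw [eval_binomShift]
  have hq : ((r j : ℤ) : ℚ) + (c : ℚ) = (m : ℚ) := by
    exact_mod_cast congrArg (fun z : ℤ => (z : ℚ)) hm
  have : ∀ l ∈ Finset.range k, ((r j : ℤ) : ℚ) + ((c : ℚ) - l) = (m : ℚ) - l := by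
    intro l _
    rw [← hq]; ring
  rw [Finset.prod_congr rfl this, prod_cast_sub, Nat.descFactorial_eq_factorial_mul_choose]
  have h0 : (k.factorial : ℚ) ≠ 0 := by exact_mod_cast k.factorial_ne_zero
  push_cast
  field_simp

lemma degreeOf_binomShift {p : ℕ} (i j : Fin p) (c : ℤ) (k : ℕ) :
    MvPolynomial.degreeOf i (binomShift j c k) ≤ if i = j then k else 0 := by
  rw [binomShift, smul_eq_C_mul]
  refine le_trans (degreeOf_mul_le _ _ _) ?_
  rw [degreeOf_C, zero_add]
  refine le_trans (degreeOf_prod_le _ _ _) ?_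
  have h1 : ∀ l ∈ Finset.range k,
      MvPolynomial.degreeOf i (X j + MvPolynomial.C ((c : ℚ) - (l : ℚ))) ≤
        if i = j then 1 else 0 := by
    intro l _
    refine le_trans (degreeOf_add_le _ _ _) ?_
    rw [degreeOf_C]
    simp only [max_le_iff]
    constructor
    · by_cases h : i = j <;> simp [h, degreeOf_X]
    · positivity
  refine le_trans (Finset.sum_le_sum h1) ?_
  rw [Finset.sum_const, Finset.card_range]
  by_cases h : i = j <;> simp [h]

lemma totalDegree_binomShift {p : ℕ} (j : Fin p) (c : ℤ) (k : ℕ) :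
    MvPolynomial.totalDegree (binomShift j c k) ≤ k := by
  rw [binomShift]
  refine le_trans (totalDegree_smul_le _ _) ?_
  refine le_trans (totalDegree_finset_prod _ _) ?_
  have : ∀ l ∈ Finset.range k,
      MvPolynomial.totalDegree (X j + MvPolynomial.C ((c : ℚ) - (l : ℚ))) ≤ 1 := by
    intro l _
    refine le_trans (totalDegree_add _ _) (max_le ?_ ?_)
    · exact le_of_eq (totalDegree_X j)
    · rw [totalDegree_C]
      omega
  refine le_trans (Finset.sum_le_sum this) ?_
  simp

/-! ### Dickson's lemma and minimal elements -/

lemma pi_nat_isPWO {n : ℕ} (s : Set (Fin n → ℕ)) : s.IsPWO :=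
  Set.isPWO_of_wellQuasiOrderedLE s

lemma minimals_finite {n : ℕ} (A : Set (Fin n → ℕ)) :
    {x | Minimal (· ∈ A) x}.Finite :=
  (setOf_minimal_antichain (· ∈ A)).finite_of_partiallyWellOrderedOn
    (pi_nat_isPWO {x | Minimal (· ∈ A) x})

lemma exists_minimal_le {n : ℕ} (A : Set (Fin n → ℕ)) {a : Fin n → ℕ} (ha : a ∈ A) :
    ∃ b, Minimal (· ∈ A) b ∧ b ≤ a := by
  set T : Set (Fin n → ℕ) := {x ∈ A | x ≤ a} with hT
  have hwf : T.IsWF := (pi_nat_isPWO T).isWF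
  have hne : T.Nonempty := ⟨a, ha, le_refl a⟩
  refine ⟨hwf.min hne, ⟨(hwf.min_mem hne).1, ?_⟩, (hwf.min_mem hne).2⟩
  intro y hy hle
  by_contra hlt
  exact hwf.not_lt_min hne ⟨hy, hle.trans (hwf.min_mem hne).2⟩
    (lt_of_le_of_ne hle (fun h => hlt (h ▸ le_refl _)))

lemma vset_eq_min {n : ℕ} (A : Set (Fin n → ℕ)) (v : Fin n → ℕ) :
    v ∈ VSet A ↔ ∀ b, Minimal (· ∈ A) b → ¬ b ≤ v := by
  constructor
  · intro h b hb
    exact h b hb.1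
  · intro h a ha hle
    obtain ⟨b, hb, hba⟩ := exists_minimal_le A ha
    exact h b hb (hba.trans hle)

/-! ### Main theorem -/

theorem statement_1 (p n : ℕ) (hp : 1 ≤ p)
    (nn : Fin p → ℕ) (hn : ∑ j, nn j = n)
    (B : Fin n → Fin p) (hBmono : Monotone B)
    (hBcard : ∀ j, (Finset.univ.filter fun i => B i = j).card = nn j)
    (A : Set (Fin n → ℕ)) :
    ∃ ω : MvPolynomial (Fin p) ℚ, IsNumerical ω ∧
      (∃ s : Fin p → ℕ, ∀ r : Fin p → ℕ, (∀ i, s i ≤ r i) →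
        MvPolynomial.eval (fun i => ((r i : ℤ) : ℚ)) ω =
          (({v ∈ VSet A | ∀ j, blockSum B v j ≤ r j} : Set (Fin n → ℕ)).ncard : ℚ)) ∧
      ω.totalDegree ≤ n ∧ ∀ i, ω.degreeOf i ≤ nn i := by
  classical
  have hfin := minimals_finite A
  set A' : Finset (Fin n → ℕ) := hfin.toFinset with hA'
  set supF : Finset (Fin n → ℕ) → (Fin n → ℕ) := fun S i => S.sup (fun a => a i) with hsupF
  set s0 : Fin p → ℕ := fun j => ∑ a ∈ A', blockSum B a j with hs0
  have hsub : ∀ S ∈ A'.powerset, ∀ j, blockSum B (supF S) j ≤ s0 j := by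
    intro S hS j
    have h1 : ∀ i, supF S i ≤ ∑ a ∈ S, a i := fun i =>
      Finset.sup_le (fun a ha => Finset.single_le_sum (f := fun a => a i) (fun _ _ => Nat.zero_le _) ha)
    calc blockSum B (supF S) j
        ≤ ∑ i ∈ Finset.univ.filter (fun i => B i = j), ∑ a ∈ S, a i :=
          Finset.sum_le_sum (fun i _ => h1 i)
      _ = ∑ a ∈ S, blockSum B a j := Finset.sum_comm
      _ ≤ s0 j := Finset.sum_le_sum_of_subset (Finset.mem_powerset.1 hS)
  have hsup_le_iff : ∀ (S : Finset (Fin n → ℕ)) (v : Fin n → ℕ),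
      supF S ≤ v ↔ ∀ a ∈ S, a ≤ v := by
    intro S v
    constructor
    · intro h a ha i
      exact le_trans (Finset.le_sup (f := fun a => a i) ha) (h i)
    · intro h i
      exact Finset.sup_le (fun a ha => h a ha i)
  set box : (Fin p → ℕ) → Finset (Fin n → ℕ) := fun r =>
    (Fintype.piFinset fun i => Finset.range (r (B i) + 1)).filter
      (fun v => ∀ j, blockSum B v j ≤ r j) with hboxdef
  have hbox : ∀ r v, v ∈ box r ↔ ∀ j, blockSum B v j ≤ r j := by
    intro r v
    simp only [hboxdef, Finset.mem_filter, Fintype.mem_piFinset, Finset.mem_range]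
    constructor
    · exact fun h => h.2
    · intro h
      refine ⟨fun i => ?_, h⟩
      have h1 : v i ≤ blockSum B v (B i) :=
        Finset.single_le_sum (fun _ _ => Nat.zero_le _) (by simp)
      have h2 := h (B i)
      omega
  have hGE : ∀ (r : Fin p → ℕ) (b : Fin n → ℕ), (∀ j, blockSum B b j ≤ r j) →
      (((box r).filter (fun v => b ≤ v)).card : ℚ) =
        ∏ j, ((r j - blockSum B b j + nn j).choose (nn j) : ℚ) := by
    intro r b hb
    have h1 : ((box r).filter (fun v => b ≤ v)).card =
        Nat.card {v : Fin n → ℕ // b ≤ v ∧ ∀ j, blockSum B v j ≤ r j} := by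
      rw [← Nat.card_eq_finsetCard]
      exact Nat.card_congr (Equiv.subtypeEquivRight (fun v => by
        simp only [Finset.mem_filter, hbox r v]
        tauto))
    rw [h1, countShift B nn hBcard b r hb, Nat.cast_prod]
  have hcount : ∀ r : Fin p → ℕ, (∀ j, s0 j ≤ r j) →
      ((((box r).filter (fun v => ∀ a ∈ A', ¬ a ≤ v)).card : ℚ)) =
        ∑ S ∈ A'.powerset, (-1 : ℚ) ^ S.card *
          ∏ j, ((r j - blockSum B (supF S) j + nn j).choose (nn j) : ℚ) := by
    intro r hr
    rw [← Finset.sum_boole]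
    have step1 : ∀ v ∈ box r,
        (if ∀ a ∈ A', ¬ a ≤ v then (1 : ℚ) else 0) =
          ∏ a ∈ A', ((if a ≤ v then (-1 : ℚ) else 0) + 1) := by
      intro v _
      by_cases h : ∀ a ∈ A', ¬ a ≤ v
      · rw [if_pos h, Finset.prod_congr rfl (fun a ha => by rw [if_neg (h a ha), zero_add]),
          Finset.prod_const_one]
      · push_neg at h
        obtain ⟨a, ha, hav⟩ := h
        rw [if_neg (by push_neg; exact ⟨a, ha, hav⟩)]
        exact (Finset.prod_eq_zero ha (by rw [if_pos hav]; ring)).symm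
    rw [Finset.sum_congr rfl step1]
    have step2 : ∀ v : Fin n → ℕ, ∏ a ∈ A', ((if a ≤ v then (-1 : ℚ) else 0) + 1) =
        ∑ S ∈ A'.powerset, (if supF S ≤ v then (-1 : ℚ) ^ S.card else 0) := by
      intro v
      rw [Finset.prod_add]
      refine Finset.sum_congr rfl fun S hS => ?_
      rw [Finset.prod_const_one, mul_one]
      by_cases h : supF S ≤ v
      · rw [if_pos h, Finset.prod_congr rfl (fun a ha => if_pos ((hsup_le_iff S v).1 h a ha)),
          Finset.prod_const]
      · rw [if_neg h]
        have hex : ∃ a ∈ S, ¬ a ≤ v := by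
          by_contra hc
          push_neg at hc
          exact h ((hsup_le_iff S v).2 hc)
        obtain ⟨a, ha, hav⟩ := hex
        exact Finset.prod_eq_zero ha (if_neg hav)
    rw [Finset.sum_congr rfl (fun v _ => step2 v), Finset.sum_comm]
    refine Finset.sum_congr rfl fun S hS => ?_
    rw [← Finset.sum_filter, Finset.sum_const, nsmul_eq_mul,
      hGE r (supF S) (fun j => le_trans (hsub S hS j) (hr j)), mul_comm]
  set ω : MvPolynomial (Fin p) ℚ := ∑ S ∈ A'.powerset, (-1 : ℚ) ^ S.card •
    ∏ j, binomShift j ((nn j : ℤ) - (blockSum B (supF S) j : ℤ)) (nn j) with hω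
  have hmain : ∀ r : Fin p → ℕ, (∀ i, s0 i ≤ r i) →
      MvPolynomial.eval (fun i => ((r i : ℤ) : ℚ)) ω =
        (({v ∈ VSet A | ∀ j, blockSum B v j ≤ r j} : Set (Fin n → ℕ)).ncard : ℚ) := by
    intro r hr
    have hset : {v ∈ VSet A | ∀ j, blockSum B v j ≤ r j} =
        ↑((box r).filter (fun v => ∀ a ∈ A', ¬ a ≤ v)) := by
      ext v
      simp only [Set.mem_setOf_eq, Finset.coe_filter, hbox r v, vset_eq_min, hA',
        Set.Finite.mem_toFinset, Set.mem_setOf_eq]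
      tauto
    rw [hset, Set.ncard_coe_finset, hcount r hr, hω, map_sum]
    refine Finset.sum_congr rfl fun S hS => ?_
    rw [smul_eq_C_mul, map_mul, eval_C, map_prod]
    congr 1
    refine Finset.prod_congr rfl fun j _ => ?_
    have hble : blockSum B (supF S) j ≤ r j := le_trans (hsub S hS j) (hr j)
    exact eval_binomShift_nat j _ (nn j) r (r j - blockSum B (supF S) j + nn j)
      (by push_cast; omega)
  refine ⟨ω, ?_, ⟨s0, hmain⟩, ?_, ?_⟩
  · refine ⟨fun i => (s0 i : ℤ), fun r hr => ?_⟩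
    have h0 : ∀ i, ((r i).toNat : ℤ) = r i := fun i =>
      Int.toNat_of_nonneg (le_trans (Int.ofNat_nonneg _) (hr i))
    have h1 : ∀ i, s0 i ≤ (r i).toNat := fun i => by
      have h : (s0 i : ℤ) ≤ r i := hr i
      omega
    have := hmain (fun i => (r i).toNat) h1
    refine ⟨(({v ∈ VSet A | ∀ j, blockSum B v j ≤ (r j).toNat} :
      Set (Fin n → ℕ)).ncard : ℤ), ?_⟩
    have hfun : (fun i => (((((r i).toNat) : ℕ) : ℤ) : ℚ)) = fun i => ((r i : ℤ) : ℚ) := by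
      funext i
      rw [h0 i]
    rw [← hfun]
    rw [this]
    push_cast
    rfl
  · rw [hω]
    refine le_trans (totalDegree_finset_sum _ _) (Finset.sup_le fun S _ => ?_)
    refine le_trans (totalDegree_smul_le _ _) ?_
    refine le_trans (totalDegree_finset_prod _ _) ?_
    calc ∑ j, (binomShift j ((nn j : ℤ) - (blockSum B (supF S) j : ℤ)) (nn j)).totalDegree
        ≤ ∑ j, nn j := Finset.sum_le_sum (fun j _ => totalDegree_binomShift _ _ _)
      _ = n := hn
  · intro i
    rw [hω]
    refine le_trans (degreeOf_sum_le _ _ _) (Finset.sup_le fun S _ => ?_)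
    rw [smul_eq_C_mul]
    refine le_trans (degreeOf_mul_le _ _ _) ?_
    rw [degreeOf_C, zero_add]
    refine le_trans (degreeOf_prod_le _ _ _) ?_
    refine le_trans (Finset.sum_le_sum fun j (_ : j ∈ Finset.univ) =>
      degreeOf_binomShift i j _ _) ?_
    rw [Finset.sum_ite_eq Finset.univ i nn]
    simp
end

section
/- Let A = {a_1,…,a_m} be a finite subset of ℕ^n with m ≥ 1, where n = n_1 + … + n_p for nonnegative integers n_1,…,n_p (p ≥ 1), and write a_i = (a_{i1},…,a_{in}). For 0 ≤ l ≤ m let Γ(l,m) be the set of all l-element subsets of {1,…,m}; for σ ∈ Γ(l,m) let ā_{σj} = max{a_{ij} : i ∈ σ} for 1 ≤ j ≤ n, and let b_{σj} = Σ_{h ∈ N_j} ā_{σh} for 1 ≤ j ≤ p, where N_j is the j-th block of indices determined by the partition. Then the dimension polynomial of A satisfies ω_A(t_1,…,t_p) = Σ_{l=0}^{m} (-1)^l Σ_{σ ∈ Γ(l,m)} ∏_{j=1}^{p} C(t_j + n_j − b_{σj}, n_j). -/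
open MvPolynomial

lemma aux_hockey (k R : ℕ) :
    ∑ y ∈ Finset.range (R + 1), (y + k).choose k = (R + k + 1).choose (k + 1) := by
  induction R with
  | zero => simp
  | succ R ih =>
    rw [Finset.sum_range_succ, ih, show R + 1 + k + 1 = (R + k + 1) + 1 by ring,
      Nat.choose_succ_succ (R + k + 1) k, Nat.succ_eq_add_one,
      show R + 1 + k = R + k + 1 by ring]
    omega

lemma aux_finite_bounded {α : Type*} [Fintype α] (P : (α → ℕ) → Prop) (g : α → ℕ)
    (h : ∀ v, P v → ∀ i, v i ≤ g i) : Finite {v : α → ℕ // P v} := by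
  apply Finite.of_injective (f := fun (v : {v : α → ℕ // P v}) (i : α) =>
    (⟨v.1 i, Nat.lt_succ_of_le (h v.1 v.2 i)⟩ : Fin (g i + 1)))
  intro v w hvw
  ext i
  exact congrArg Fin.val (congrFun hvw i)

lemma aux_simplex_fin (k R : ℕ) :
    Nat.card {w : Fin k → ℕ // ∑ i, w i ≤ R} = (R + k).choose k := by
  induction k generalizing R with
  | zero =>
    have : Nat.card {w : Fin 0 → ℕ // ∑ i, w i ≤ R} = 1 := by
      rw [Nat.card_eq_one_iff_unique]
      constructor
      · constructor
        rintro ⟨v, _⟩ ⟨w, _⟩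
        ext i
        exact i.elim0
      · exact ⟨⟨fun i => i.elim0, by simp⟩⟩
    simp [this]
  | succ k ih =>
    have e : {w : Fin (k + 1) → ℕ // ∑ i, w i ≤ R} ≃
        Σ x : Fin (R + 1), {w : Fin k → ℕ // ∑ i, w i ≤ R - (x : ℕ)} := by
      refine ⟨fun w => ⟨⟨w.1 0, ?_⟩, ⟨Fin.tail w.1, ?_⟩⟩,
        fun x => ⟨Fin.cons (x.1 : ℕ) x.2.1, ?_⟩, ?_, ?_⟩
      · have := w.2
        rw [Fin.sum_univ_succ] at this
        omega
      · have := w.2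
        rw [Fin.sum_univ_succ] at this
        simp only [Fin.tail]
        omega
      · rw [Fin.sum_univ_succ]
        have h1 := x.2.2
        have h2 := x.1.2
        simp only [Fin.cons_zero, Fin.cons_succ]
        omega
      · rintro ⟨w, hw⟩
        simp [Fin.cons_self_tail]
      · rintro ⟨x, w, hw⟩
        rfl
    rw [Nat.card_congr e]
    have f1 : ∀ x : Fin (R + 1), Finite {w : Fin k → ℕ // ∑ i, w i ≤ R - (x:ℕ)} := by
      intro x
      exact aux_finite_bounded _ (fun _ => R) (fun v hv i => by
        have := Finset.single_le_sum (f := v) (fun j _ => Nat.zero_le _) (Finset.mem_univ i)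
        show v i ≤ R
        omega)
    have := fun x : Fin (R+1) => (f1 x)
    have hcard : Nat.card (Σ x : Fin (R + 1), {w : Fin k → ℕ // ∑ i, w i ≤ R - (x:ℕ)}) =
        ∑ x : Fin (R + 1), Nat.card {w : Fin k → ℕ // ∑ i, w i ≤ R - (x:ℕ)} := by
      letI : ∀ x : Fin (R+1), Fintype {w : Fin k → ℕ // ∑ i, w i ≤ R - (x:ℕ)} :=
        fun x => Fintype.ofFinite _
      simp [Nat.card_eq_fintype_card, Fintype.card_sigma]
    rw [hcard]
    have : ∀ x : Fin (R + 1), Nat.card {w : Fin k → ℕ // ∑ i, w i ≤ R - (x:ℕ)} =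
        (R - (x:ℕ) + k).choose k := fun x => ih _
    rw [Finset.sum_congr rfl (fun x _ => this x)]
    calc (∑ x : Fin (R + 1), (R - (x : ℕ) + k).choose k)
        = ∑ x ∈ Finset.range (R + 1), (R - x + k).choose k :=
          Fin.sum_univ_eq_sum_range (fun x => (R - x + k).choose k) (R + 1)
      _ = ∑ x ∈ Finset.range (R + 1), (x + k).choose k := by
          have := Finset.sum_range_reflect (fun x => (x + k).choose k) (R + 1)
          simpa using this
      _ = (R + k + 1).choose (k + 1) := aux_hockey k R
      _ = (R + (k + 1)).choose (k + 1) := by rw [show R + k + 1 = R + (k + 1) by ring]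

lemma aux_simplex_count {α : Type*} [Fintype α] (R : ℕ) :
    Nat.card {w : α → ℕ // ∑ i, w i ≤ R} = (R + Fintype.card α).choose (Fintype.card α) := by
  classical
  obtain e := Fintype.equivFin α
  have he : {w : α → ℕ // ∑ i, w i ≤ R} ≃ {w : Fin (Fintype.card α) → ℕ // ∑ i, w i ≤ R} := by
    refine Equiv.subtypeEquiv (Equiv.piCongrLeft' (fun _ => ℕ) e) fun w => ?_
    exact Iff.of_eq (congrArg (· ≤ R) (Equiv.sum_comp e.symm w).symm)
  rw [Nat.card_congr he, aux_simplex_fin]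

lemma aux_block_count {n p : ℕ} (B : Fin n → Fin p) (nn : Fin p → ℕ)
    (hBcard : ∀ j, (Finset.univ.filter fun i => B i = j).card = nn j) (R : Fin p → ℕ) :
    Nat.card {v : Fin n → ℕ // ∀ j, blockSum B v j ≤ R j} =
      ∏ j, (R j + nn j).choose (nn j) := by
  classical
  have hb : ∀ (v : Fin n → ℕ) (j : Fin p),
      blockSum B v j = ∑ i : {i // B i = j}, v i.1 :=
    fun v j => Finset.sum_subtype _ (by simp) v
  have e : {v : Fin n → ℕ // ∀ j, blockSum B v j ≤ R j} ≃
      ∀ j : Fin p, {w : {i // B i = j} → ℕ // ∑ i, w i ≤ R j} := by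
    refine ⟨fun v j => ⟨fun i => v.1 i.1, by rw [← hb]; exact v.2 j⟩,
      fun w => ⟨fun i => (w (B i)).1 ⟨i, rfl⟩, fun j => ?_⟩, fun v => ?_, fun w => ?_⟩
    · rw [hb]
      have : ∀ i : {i // B i = j}, (w (B i.1)).1 ⟨i.1, rfl⟩ = (w j).1 i := by
        rintro ⟨i, hi⟩
        subst hi
        rfl
      rw [Finset.sum_congr rfl fun i _ => this i]
      exact (w j).2
    · apply Subtype.ext; funext i; rfl
    · funext j
      apply Subtype.ext; funext i
      obtain ⟨i, hi⟩ := i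
      subst hi
      rfl
  rw [Nat.card_congr e, Nat.card_pi]
  refine Finset.prod_congr rfl fun j _ => ?_
  rw [aux_simplex_count]
  congr 2 <;> rw [Fintype.card_subtype, hBcard]

lemma aux_shift_count {n p : ℕ} (B : Fin n → Fin p) (c : Fin n → ℕ) (R : Fin p → ℕ)
    (hb : ∀ j, blockSum B c j ≤ R j) :
    Nat.card {v : Fin n → ℕ // c ≤ v ∧ ∀ j, blockSum B v j ≤ R j} =
      Nat.card {w : Fin n → ℕ // ∀ j, blockSum B w j ≤ R j - blockSum B c j} := by
  apply Nat.card_congr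
  have hadd : ∀ (u : Fin n → ℕ) (j : Fin p), blockSum B (fun i => u i + c i) j
      = blockSum B u j + blockSum B c j := fun u j => Finset.sum_add_distrib
  refine ⟨fun v => ⟨fun i => v.1 i - c i, fun j => ?_⟩,
    fun w => ⟨fun i => w.1 i + c i, ⟨fun i => Nat.le_add_left _ _, fun j => ?_⟩⟩,
    fun v => ?_, fun w => ?_⟩
  · have h1 : blockSum B (fun i => v.1 i - c i + c i) j = blockSum B v.1 j := by
      congr 1; funext i; exact Nat.sub_add_cancel (v.2.1 i)
    have h0 := hadd (fun i => v.1 i - c i) j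
    rw [h1] at h0
    have h2 := v.2.2 j
    omega
  · have h0 := hadd w.1 j
    have h2 := w.2 j
    have h3 := hb j
    omega
  · apply Subtype.ext; funext i
    exact Nat.sub_add_cancel (v.2.1 i)
  · apply Subtype.ext; funext i
    simp

open MvPolynomial in
lemma aux_grid_zero : ∀ {p : ℕ} (f : MvPolynomial (Fin p) ℚ) (s : Fin p → ℕ),
    (∀ r : Fin p → ℕ, (∀ i, s i ≤ r i) → eval (fun i => (r i : ℚ)) f = 0) → f = 0 := by
  intro p
  induction p with
  | zero =>
    intro f s h
    refine MvPolynomial.funext fun x => ?_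
    rw [map_zero, Subsingleton.elim x (fun i => ((s i : ℕ) : ℚ))]
    exact h s fun i => le_refl _
  | succ p ih =>
    intro f s h
    have key : ∀ r' : Fin p → ℕ, (∀ i, s i.succ ≤ r' i) →
        Polynomial.map (eval fun i => (r' i : ℚ)) (finSuccEquiv ℚ p f) = 0 := by
      intro r' hr'
      apply Polynomial.eq_zero_of_infinite_isRoot
      apply Set.Infinite.mono (s := (fun k : ℕ => (k : ℚ)) '' Set.Ici (s 0))
      · rintro x ⟨k, hk, rfl⟩
        show Polynomial.IsRoot _ _
        unfold Polynomial.IsRoot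
        rw [← eval_eq_eval_mv_eval']
        have hc : (Fin.cons (k : ℚ) (fun i => (r' i : ℚ)) : Fin (p+1) → ℚ) =
            fun i => ((Fin.cons k r' : Fin (p+1) → ℕ) i : ℚ) := by
          funext i
          refine Fin.cases ?_ (fun i => ?_) i <;> simp
        rw [hc]
        exact h (Fin.cons k r') fun i => Fin.cases (by simpa using hk) (fun i => by simpa using hr' i) i
      · exact Set.Infinite.image (fun a _ b _ hab => Nat.cast_injective hab) (Set.Ici_infinite _)
    have hco : ∀ d, (finSuccEquiv ℚ p f).coeff d = 0 := by
      intro d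
      refine ih _ (fun i => s i.succ) fun r' hr' => ?_
      have h2 := congrArg (fun q => Polynomial.coeff q d) (key r' hr')
      simpa [Polynomial.coeff_map] using h2
    have hz : finSuccEquiv ℚ p f = 0 := Polynomial.ext fun d => by simp [hco d]
    have := (finSuccEquiv ℚ p).injective (a₁ := f) (a₂ := 0) (by rw [hz]; simp)
    exact this

open MvPolynomial in
lemma aux_eval_binomShift {p : ℕ} (j : Fin p) (b k : ℕ) (r : Fin p → ℕ) (hb : b ≤ r j) :
    eval (fun i => (r i : ℚ)) (binomShift j ((k : ℤ) - (b : ℤ)) k) =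
      ((r j - b + k).choose k : ℚ) := by
  rw [binomShift, smul_eval, map_prod]
  push_cast
  have hN : ∀ l ∈ Finset.range k,
      eval (fun i => (r i : ℚ)) (X j + MvPolynomial.C ((k : ℚ) - (b : ℚ) - (l : ℚ))) =
        (((r j - b + k) - l : ℕ) : ℚ) := by
    intro l hl
    rw [Finset.mem_range] at hl
    rw [map_add, eval_X, eval_C, Nat.cast_sub (by omega)]
    push_cast [Nat.cast_sub hb]
    ring
  rw [Finset.prod_congr rfl hN, ← Nat.cast_prod, ← Nat.descFactorial_eq_prod_range,
    Nat.descFactorial_eq_factorial_mul_choose, Nat.cast_mul]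
  rw [inv_mul_eq_div, mul_comm, mul_div_assoc, div_self (by
    exact_mod_cast Nat.factorial_ne_zero k), mul_one]

lemma aux_count {n p m : ℕ} (B : Fin n → Fin p) (a : Fin m → Fin n → ℕ)
    (nn : Fin p → ℕ) (hBcard : ∀ j, (Finset.univ.filter fun i => B i = j).card = nn j)
    (r : Fin p → ℕ)
    (hr : ∀ (σ : Finset (Fin m)) (j : Fin p),
      (∑ h ∈ Finset.univ.filter (fun h => B h = j), σ.sup (fun i => a i h)) ≤ r j) :
    (({v | (∀ i, ¬ a i ≤ v) ∧ ∀ j, blockSum B v j ≤ r j} : Set (Fin n → ℕ)).ncard : ℚ) =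
      ∑ σ ∈ (Finset.univ : Finset (Fin m)).powerset, (-1 : ℚ) ^ σ.card *
        ∏ j, ((r j - (∑ h ∈ Finset.univ.filter (fun h => B h = j),
          σ.sup (fun i => a i h)) + nn j).choose (nn j) : ℚ) := by
  classical
  set c : Finset (Fin m) → Fin n → ℕ := fun σ h => σ.sup (fun i => a i h) with hc
  have hbc : ∀ (σ : Finset (Fin m)) (j : Fin p), blockSum B (c σ) j =
      ∑ h ∈ Finset.univ.filter (fun h => B h = j), σ.sup (fun i => a i h) := fun σ j => rfl
  set T : Finset (Fin n → ℕ) := Finset.Icc 0 (fun i => r (B i)) with hT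
  have hmemT : ∀ v : Fin n → ℕ, (∀ j, blockSum B v j ≤ r j) → v ∈ T := by
    intro v hv
    rw [hT, Finset.mem_Icc]
    refine ⟨fun i => Nat.zero_le _, fun i => ?_⟩
    have h1 : v i ≤ blockSum B v (B i) :=
      Finset.single_le_sum (f := v) (fun h _ => Nat.zero_le _) (by simp)
    exact h1.trans (hv (B i))
  set Q : Finset (Fin n → ℕ) := T.filter (fun v => ∀ j, blockSum B v j ≤ r j) with hQdef
  have hQ : ∀ v, v ∈ Q ↔ ∀ j, blockSum B v j ≤ r j := by
    intro v
    rw [hQdef, Finset.mem_filter]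
    exact ⟨fun h => h.2, fun h => ⟨hmemT v h, h⟩⟩
  -- Step A : the set is the filtered finset
  have hsetA : ({v | (∀ i, ¬ a i ≤ v) ∧ ∀ j, blockSum B v j ≤ r j} : Set (Fin n → ℕ)) =
      ↑(Q.filter (fun v => ∀ i, ¬ a i ≤ v)) := by
    ext v
    simp only [Set.mem_setOf_eq, Finset.coe_filter, hQ v]
    tauto
  rw [hsetA, Set.ncard_coe_finset]
  -- Step B : card as a sum of products of indicators
  have hstepB : (((Q.filter (fun v => ∀ i, ¬ a i ≤ v)).card : ℚ)) =
      ∑ v ∈ Q, ∏ i : Fin m, (-(if a i ≤ v then (1:ℚ) else 0) + 1) := by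
    rw [Finset.card_filter, Nat.cast_sum]
    refine Finset.sum_congr rfl fun v _ => ?_
    by_cases hv : ∀ i, ¬ a i ≤ v
    · rw [if_pos hv, Nat.cast_one]
      symm
      refine Finset.prod_eq_one fun i _ => by rw [if_neg (hv i)]; ring
    · rw [if_neg hv, Nat.cast_zero]
      push_neg at hv
      obtain ⟨i, hi⟩ := hv
      symm
      refine Finset.prod_eq_zero (Finset.mem_univ i) ?_
      rw [if_pos hi]; ring
  rw [hstepB]
  -- Step C : expand the product
  have hstepC : ∀ v ∈ Q, ∏ i : Fin m, (-(if a i ≤ v then (1:ℚ) else 0) + 1) =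
      ∑ σ ∈ (Finset.univ : Finset (Fin m)).powerset,
        (-1 : ℚ) ^ σ.card * (if c σ ≤ v then (1:ℚ) else 0) := by
    intro v _
    rw [Finset.prod_add]
    refine Finset.sum_congr rfl fun σ hσ => ?_
    rw [Finset.prod_const_one, mul_one]
    have h1 : ∏ i ∈ σ, (-(if a i ≤ v then (1:ℚ) else 0)) =
        (-1 : ℚ) ^ σ.card * ∏ i ∈ σ, (if a i ≤ v then (1:ℚ) else 0) := by
      rw [← Finset.prod_const (b := (-1 : ℚ)), ← Finset.prod_mul_distrib]
      exact Finset.prod_congr rfl fun i _ => by ring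
    rw [h1]
    congr 1
    by_cases hcv : c σ ≤ v
    · rw [if_pos hcv]
      refine Finset.prod_eq_one fun i hi => ?_
      have hav : a i ≤ v := fun h => le_trans (Finset.le_sup (f := fun i => a i h) hi) (hcv h)
      simp [hav]
    · rw [if_neg hcv]
      have h2 : ¬ ∀ i ∈ σ, a i ≤ v := fun hall =>
        hcv fun h => Finset.sup_le fun i hi => hall i hi h
      push_neg at h2
      obtain ⟨i, hi, hnot⟩ := h2
      exact Finset.prod_eq_zero hi (by simp [hnot])
  rw [Finset.sum_congr rfl hstepC, Finset.sum_comm]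
  -- Step D+E : inner sums are cardinalities, evaluate them
  refine Finset.sum_congr rfl fun σ hσ => ?_
  rw [← Finset.mul_sum]
  congr 1
  have hD : ∑ v ∈ Q, (if c σ ≤ v then (1:ℚ) else 0) =
      ((Q.filter (fun v => c σ ≤ v)).card : ℚ) := by
    rw [Finset.card_filter, Nat.cast_sum]
    exact Finset.sum_congr rfl fun v _ => by split <;> simp
  rw [hD]
  have hE : ((Q.filter (fun v => c σ ≤ v)) : Set (Fin n → ℕ)) =
      {v | c σ ≤ v ∧ ∀ j, blockSum B v j ≤ r j} := by
    ext v
    simp only [Finset.coe_filter, Set.mem_setOf_eq, hQ v]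
    tauto
  have hE2 : (Q.filter (fun v => c σ ≤ v)).card =
      Nat.card {v : Fin n → ℕ // c σ ≤ v ∧ ∀ j, blockSum B v j ≤ r j} := by
    rw [← Set.ncard_coe_finset, hE, ← Nat.card_coe_set_eq]
    rfl
  have hb' : ∀ j, blockSum B (c σ) j ≤ r j := fun j => by rw [hbc]; exact hr σ j
  rw [hE2, aux_shift_count B (c σ) r hb', aux_block_count B nn hBcard]
  rw [Nat.cast_prod]
  refine Finset.prod_congr rfl fun j _ => ?_
  rw [hbc]

theorem statement_4 (p n m : ℕ) (hp : 1 ≤ p) (hm : 1 ≤ m)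
    (nn : Fin p → ℕ) (hn : ∑ j, nn j = n)
    (B : Fin n → Fin p) (hBmono : Monotone B)
    (hBcard : ∀ j, (Finset.univ.filter fun i => B i = j).card = nn j)
    (a : Fin m → Fin n → ℕ)
    (ω : MvPolynomial (Fin p) ℚ) (hω : IsNumerical ω)
    (hagree : ∃ s : Fin p → ℕ, ∀ r : Fin p → ℕ, (∀ i, s i ≤ r i) →
      MvPolynomial.eval (fun i => ((r i : ℤ) : ℚ)) ω =
        (({v ∈ VSet (Set.range a) | ∀ j, blockSum B v j ≤ r j} : Set (Fin n → ℕ)).ncard : ℚ)) :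
    ω = ∑ σ ∈ (Finset.univ : Finset (Fin m)).powerset, ((-1 : ℚ) ^ σ.card) •
          ∏ j, binomShift j
            ((nn j : ℤ) -
              ((∑ h ∈ Finset.univ.filter (fun h => B h = j), σ.sup (fun i => a i h) : ℕ) : ℤ))
            (nn j) := by
  classical
  obtain ⟨s₀, hs₀⟩ := hagree
  have hble : ∀ (σ : Finset (Fin m)) (j : Fin p),
      (∑ h ∈ Finset.univ.filter (fun h => B h = j), σ.sup (fun i => a i h)) ≤
      (∑ h ∈ Finset.univ.filter (fun h => B h = j), Finset.univ.sup (fun i => a i h)) :=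
    fun σ j => Finset.sum_le_sum fun h _ => Finset.sup_mono (Finset.subset_univ σ)
  rw [← sub_eq_zero]
  apply aux_grid_zero _ (fun j => max (s₀ j)
    (∑ h ∈ Finset.univ.filter (fun h => B h = j), Finset.univ.sup (fun i => a i h)))
  intro r hrr
  have h1 : ∀ i, s₀ i ≤ r i := fun i => le_trans (le_max_left _ _) (hrr i)
  have h2 : ∀ (σ : Finset (Fin m)) (j : Fin p),
      (∑ h ∈ Finset.univ.filter (fun h => B h = j), σ.sup (fun i => a i h)) ≤ r j :=
    fun σ j => le_trans (hble σ j) (le_trans (le_max_right _ _) (hrr j))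
  rw [map_sub, sub_eq_zero]
  have hcast : (fun i => ((r i : ℤ) : ℚ)) = fun i => ((r i : ℕ) : ℚ) := by
    funext i; push_cast; rfl
  have hset : ({v ∈ VSet (Set.range a) | ∀ j, blockSum B v j ≤ r j} : Set (Fin n → ℕ)) =
      {v | (∀ i, ¬ a i ≤ v) ∧ ∀ j, blockSum B v j ≤ r j} := by
    ext v
    simp [VSet, Set.mem_setOf_eq]
  have hω : eval (fun i => ((r i : ℕ) : ℚ)) ω =
      (({v | (∀ i, ¬ a i ≤ v) ∧ ∀ j, blockSum B v j ≤ r j} : Set (Fin n → ℕ)).ncard : ℚ) := by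
    rw [← hcast, hs₀ r h1, hset]
  rw [hω, aux_count B a nn hBcard r h2, map_sum]
  refine Finset.sum_congr rfl fun σ hσ => ?_
  rw [smul_eval, map_prod]
  congr 1
  refine Finset.prod_congr rfl fun j _ => ?_
  exact (aux_eval_binomShift j _ (nn j) r (h2 σ j)).symm
end

section
/- Let K be a field of characteristic zero, A_n(K) the Weyl algebra, M a finitely generated left A_n(K)-module, and let ψ_M(t) = a_d t^d + … + a_1 t + a_0 be the Bernstein polynomial of M associated with a finite system of generators g_1,…,g_p (so ψ_M(r) = dim_K Σ_{i=1}^p W_r g_i for all sufficiently large r). Then the degree d of ψ_M and the integer d!·a_d do not depend on the choice of the finite system of generators of M. -/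
set_option synthInstance.maxHeartbeats 400000
set_option maxHeartbeats 1000000

open MvPolynomial

noncomputable def weylGens (n : ℕ) (K : Type) [Field K] :
    Set (Module.End K (MvPolynomial (Fin n) K)) :=
  (Set.range fun i : Fin n =>
      (LinearMap.mulLeft K (X i : MvPolynomial (Fin n) K) : Module.End K (MvPolynomial (Fin n) K))) ∪
  (Set.range fun i : Fin n => ((pderiv i).toLinearMap : Module.End K (MvPolynomial (Fin n) K)))

noncomputable def WeylAlg (n : ℕ) (K : Type) [Field K] :
    Subalgebra K (Module.End K (MvPolynomial (Fin n) K)) :=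
  Algebra.adjoin K (weylGens n K)

noncomputable def wx (n : ℕ) (K : Type) [Field K] (i : Fin n) : WeylAlg n K :=
  ⟨LinearMap.mulLeft K (X i), Algebra.subset_adjoin (Set.mem_union_left _ ⟨i, rfl⟩)⟩

noncomputable def wd (n : ℕ) (K : Type) [Field K] (i : Fin n) : WeylAlg n K :=
  ⟨(pderiv i).toLinearMap, Algebra.subset_adjoin (Set.mem_union_right _ ⟨i, rfl⟩)⟩

noncomputable def wMono (n : ℕ) (K : Type) [Field K] (α β : Fin n → ℕ) : WeylAlg n K :=
  (((List.finRange n).map fun i => wx n K i ^ α i).prod) *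
  (((List.finRange n).map fun i => wd n K i ^ β i).prod)

def ordTot (n : ℕ) (α β : Fin n → ℕ) : ℕ := (∑ i, α i) + ∑ i, β i

noncomputable def bernW (n : ℕ) (K : Type) [Field K] (r : ℤ) : Submodule K (WeylAlg n K) :=
  Submodule.span K {D | ∃ α β : Fin n → ℕ, (ordTot n α β : ℤ) ≤ r ∧ D = wMono n K α β}

noncomputable def modFil (n : ℕ) (K : Type) [Field K] (M : Type) [AddCommGroup M]
    [Module K M] [Module (WeylAlg n K) M] (m : ℕ) (g : Fin m → M) (r : ℤ) :
    Submodule K M :=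
  Submodule.span K {x | ∃ i, ∃ D ∈ bernW n K r, x = D • g i}


variable {n : ℕ} {K : Type} [Field K]

lemma pderiv_comm_aux (i j : Fin n) (f : MvPolynomial (Fin n) K) :
    pderiv i (pderiv j f) = pderiv j (pderiv i f) := by
  induction f using MvPolynomial.induction_on with
  | C => simp
  | add p q hp hq => simp [hp, hq]
  | mul_X p k hp => simp [pderiv_mul, hp, Pi.single_apply, apply_ite (pderiv i), apply_ite (pderiv j)]; abel

lemma heisenberg_pow {A : Type*} [Ring A] (x d : A) (h : d * x = x * d + 1) (k : ℕ) :
    d ^ (k + 1) * x = x * d ^ (k + 1) + (k + 1) • d ^ k := by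
  induction k with
  | zero => simpa using h
  | succ k ih =>
    have h1 : d ^ (k + 2) * x = d * (d ^ (k + 1) * x) := by rw [← mul_assoc, ← pow_succ']
    rw [h1, ih, mul_add, ← mul_assoc, h, mul_smul_comm, add_mul, one_mul, ← pow_succ']
    rw [mul_assoc, ← pow_succ', succ_nsmul (d ^ (k+1)) (k+1)]
    abel

lemma wx_comm (i j : Fin n) : Commute (wx n K i) (wx n K j) := by
  apply Subtype.ext
  apply LinearMap.ext
  intro p
  show (X i : MvPolynomial (Fin n) K) * (X j * p) = X j * (X i * p)
  ring

lemma wd_comm (i j : Fin n) : Commute (wd n K i) (wd n K j) := by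
  apply Subtype.ext
  apply LinearMap.ext
  intro p
  exact pderiv_comm_aux i j p

lemma wd_wx_comm {i j : Fin n} (h : i ≠ j) : Commute (wd n K i) (wx n K j) := by
  apply Subtype.ext
  apply LinearMap.ext
  intro p
  suffices e : pderiv i (X j * p) = X j * pderiv i p by exact e
  rw [pderiv_mul, pderiv_X_of_ne h.symm]
  ring

lemma wd_mul_wx (i : Fin n) : wd n K i * wx n K i = wx n K i * wd n K i + 1 := by
  apply Subtype.ext
  apply LinearMap.ext
  intro p
  suffices e : pderiv i (X i * p) = X i * pderiv i p + p by exact e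
  rw [pderiv_mul, pderiv_X_self]
  ring

lemma wd_pow_mul_wx (i : Fin n) (k : ℕ) :
    wd n K i ^ (k + 1) * wx n K i = wx n K i * wd n K i ^ (k + 1) + (k + 1) • wd n K i ^ k :=
  heisenberg_pow (A := WeylAlg n K) _ _ (wd_mul_wx i) k

section ListProd
variable {A : Type*} [Monoid A]

lemma listProd_pow_add (f : Fin n → A) (hf : ∀ i j, Commute (f i) (f j))
    (g h : Fin n → ℕ) (l : List (Fin n)) :
    (l.map fun j => f j ^ (g j + h j)).prod =
      (l.map fun j => f j ^ g j).prod * (l.map fun j => f j ^ h j).prod := by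
  induction l with
  | nil => simp
  | cons a l ih =>
    have hc : Commute (f a ^ h a) ((l.map fun j => f j ^ g j).prod) := by
      apply Commute.list_prod_right
      intro y hy
      obtain ⟨j, _, rfl⟩ := List.mem_map.mp hy
      exact (hf a j).pow_pow _ _
    simp only [List.map_cons, List.prod_cons]
    rw [ih, pow_add, mul_assoc, mul_assoc, ← mul_assoc (f a ^ h a), hc.eq, mul_assoc]

lemma listProd_pow_single (f : Fin n → A) (i : Fin n) (c : ℕ) (l : List (Fin n)) :
    (l.map fun j => f j ^ (Pi.single i c) j).prod = f i ^ (c * l.count i) := by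
  induction l with
  | nil => simp
  | cons a l ih =>
    simp only [List.map_cons, List.prod_cons, ih]
    rcases eq_or_ne a i with rfl | hne
    · rw [List.count_cons_self, Pi.single_eq_same, ← pow_add]
      congr 1
      ring
    · rw [List.count_cons_of_ne hne, Pi.single_eq_of_ne hne]
      simp

end ListProd

noncomputable def Xp (n : ℕ) (K : Type) [Field K] (α : Fin n → ℕ) : WeylAlg n K :=
  ((List.finRange n).map fun i => wx n K i ^ α i).prod

noncomputable def Dp (n : ℕ) (K : Type) [Field K] (β : Fin n → ℕ) : WeylAlg n K :=
  ((List.finRange n).map fun i => wd n K i ^ β i).prod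

lemma wMono_eq (α β : Fin n → ℕ) : wMono n K α β = Xp n K α * Dp n K β := rfl

lemma Xp_add (α α' : Fin n → ℕ) : Xp n K (α + α') = Xp n K α * Xp n K α' :=
  listProd_pow_add _ wx_comm _ _ _

lemma Dp_add (β β' : Fin n → ℕ) : Dp n K (β + β') = Dp n K β * Dp n K β' :=
  listProd_pow_add _ wd_comm _ _ _

lemma count_finRange (i : Fin n) : (List.finRange n).count i = 1 :=
  List.count_eq_one_of_mem (List.nodup_finRange n) (List.mem_finRange i)

lemma Xp_single (i : Fin n) (c : ℕ) : Xp n K (Pi.single i c) = wx n K i ^ c := by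
  rw [Xp, listProd_pow_single, count_finRange, mul_one]

lemma Dp_single (i : Fin n) (c : ℕ) : Dp n K (Pi.single i c) = wd n K i ^ c := by
  rw [Dp, listProd_pow_single, count_finRange, mul_one]

lemma Xp_zero : Xp n K 0 = 1 := by
  simp [Xp]

lemma Dp_zero : Dp n K 0 = 1 := by
  simp [Dp]

lemma Dp_comm_wx {β : Fin n → ℕ} {i : Fin n} (hβ : β i = 0) :
    Commute (wx n K i) (Dp n K β) := by
  apply Commute.list_prod_right
  intro y hy
  obtain ⟨j, _, rfl⟩ := List.mem_map.mp hy
  rcases eq_or_ne j i with rfl | hne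
  · rw [hβ, pow_zero]; exact Commute.one_right _
  · exact ((wd_wx_comm hne).symm.pow_right _)

lemma update_decomp (β : Fin n → ℕ) (i : Fin n) :
    β = Function.update β i 0 + Pi.single i (β i) := by
  funext j
  rcases eq_or_ne j i with rfl | hne
  · simp
  · simp [Function.update_of_ne hne, Pi.single_eq_of_ne hne]

lemma Dp_mul_wx (β : Fin n → ℕ) (i : Fin n) :
    Dp n K β * wx n K i =
      wx n K i * Dp n K β + β i • Dp n K (β - Pi.single i 1) := by
  set β' := Function.update β i 0 with hβ'
  have hβ'i : β' i = 0 := by simp [hβ']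
  rcases Nat.eq_zero_or_eq_succ_pred (β i) with h0 | hsucc
  · have hsub : β - Pi.single i 1 = β := by
      funext j
      rcases eq_or_ne j i with rfl | hne
      · simp [h0]
      · simp [Pi.single_eq_of_ne hne]
    rw [h0, zero_smul, add_zero]
    have : β' = β := by
      funext j
      rcases eq_or_ne j i with rfl | hne
      · simp [hβ', h0]
      · simp [hβ', Function.update_of_ne hne]
    have hc := Dp_comm_wx (n := n) (K := K) hβ'i
    rw [this] at hc
    exact hc.symm.eq
  · set k := β i - 1 with hk
    have hβi : β i = k + 1 := hsucc
    have hdec : Dp n K β = Dp n K β' * wd n K i ^ (k + 1) := by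
      conv_lhs => rw [update_decomp β i]
      rw [Dp_add, hβi, Dp_single]
    have hsub : β - Pi.single i 1 = β' + Pi.single i k := by
      funext j
      rcases eq_or_ne j i with rfl | hne
      · simp [hβ', hβi]
      · simp [hβ', Function.update_of_ne hne, Pi.single_eq_of_ne hne]
    have hcomm := Dp_comm_wx (n := n) (K := K) hβ'i
    rw [hdec, mul_assoc, wd_pow_mul_wx, mul_add, ← mul_assoc, ← hcomm.eq, mul_assoc, ← hdec]
    rw [mul_smul_comm, hsub, Dp_add, Dp_single, hβi]

lemma wMono_mul_wx (α β : Fin n → ℕ) (i : Fin n) :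
    wMono n K α β * wx n K i =
      wMono n K (α + Pi.single i 1) β + β i • wMono n K α (β - Pi.single i 1) := by
  rw [wMono_eq, mul_assoc, Dp_mul_wx, mul_add, ← mul_assoc]
  have hx : Xp n K α * wx n K i = Xp n K (α + Pi.single i 1) := by
    rw [Xp_add, Xp_single, pow_one]
  rw [hx, mul_smul_comm, ← wMono_eq, ← wMono_eq]

lemma wMono_mul_wd (α β : Fin n → ℕ) (i : Fin n) :
    wMono n K α β * wd n K i = wMono n K α (β + Pi.single i 1) := by
  rw [wMono_eq, wMono_eq, mul_assoc, Dp_add, Dp_single, pow_one]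

lemma wx_mul_wMono {α : Fin n → ℕ} (β : Fin n → ℕ) {i : Fin n} (hα : α i ≠ 0) :
    wMono n K α β = wx n K i * wMono n K (α - Pi.single i 1) β := by
  have hdec : α = Pi.single i 1 + (α - Pi.single i 1) := by
    funext j
    rcases eq_or_ne j i with rfl | hne
    · simp; omega
    · simp [Pi.single_eq_of_ne hne]
  rw [wMono_eq, wMono_eq]
  conv_lhs => rw [hdec]
  rw [Xp_add, Xp_single, pow_one, mul_assoc]

lemma wd_mul_wMono (β : Fin n → ℕ) {i : Fin n} (hβ : β i ≠ 0) :
    wMono n K 0 β = wd n K i * wMono n K 0 (β - Pi.single i 1) := by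
  have hdec : β = Pi.single i 1 + (β - Pi.single i 1) := by
    funext j
    rcases eq_or_ne j i with rfl | hne
    · simp; omega
    · simp [Pi.single_eq_of_ne hne]
  rw [wMono_eq, wMono_eq, Xp_zero, one_mul, one_mul]
  conv_lhs => rw [hdec]
  rw [Dp_add, Dp_single, pow_one]

lemma wMono_mem {α β : Fin n → ℕ} {r : ℤ} (h : (ordTot n α β : ℤ) ≤ r) :
    wMono n K α β ∈ bernW n K r :=
  Submodule.subset_span ⟨α, β, h, rfl⟩

lemma bernW_mono {r r' : ℤ} (h : r ≤ r') : bernW n K r ≤ bernW n K r' :=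
  Submodule.span_mono (fun _ ⟨α, β, hab, hD⟩ => ⟨α, β, le_trans hab h, hD⟩)

lemma sum_single_one (i : Fin n) : ∑ j, (Pi.single i 1 : Fin n → ℕ) j = 1 := by
  simp [Finset.sum_pi_single']

lemma sum_add_single (α : Fin n → ℕ) (i : Fin n) :
    ∑ j, (α + Pi.single i 1 : Fin n → ℕ) j = (∑ j, α j) + 1 := by
  simp only [Pi.add_apply, Finset.sum_add_distrib, sum_single_one]

lemma sum_sub_single {α : Fin n → ℕ} {i : Fin n} (h : α i ≠ 0) :
    (∑ j, (α - Pi.single i 1 : Fin n → ℕ) j) + 1 = ∑ j, α j := by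
  have hdec : α = Pi.single i 1 + (α - Pi.single i 1) := by
    funext j
    rcases eq_or_ne j i with rfl | hne
    · simp; omega
    · simp [Pi.single_eq_of_ne hne]
  conv_rhs => rw [hdec]
  simp only [Pi.add_apply, Finset.sum_add_distrib, sum_single_one]
  omega

lemma sum_sub_single_le (α : Fin n → ℕ) (i : Fin n) :
    ∑ j, (α - Pi.single i 1 : Fin n → ℕ) j ≤ ∑ j, α j := by
  apply Finset.sum_le_sum
  intro j _
  simp only [Pi.sub_apply]
  omega

lemma wMono_mul_wx_mem (α β : Fin n → ℕ) (i : Fin n) :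
    wMono n K α β * wx n K i ∈ bernW n K ((ordTot n α β : ℤ) + 1) := by
  rw [wMono_mul_wx]
  refine add_mem (wMono_mem ?_) (nsmul_mem (wMono_mem ?_) _)
  · have h2 : ordTot n (α + Pi.single i 1) β = ordTot n α β + 1 := by
      simp only [ordTot, sum_add_single]
      omega
    rw [h2]
    push_cast
    omega
  · have h2 : ordTot n α (β - Pi.single i 1) ≤ ordTot n α β := by
      have := sum_sub_single_le β i
      simp only [ordTot]
      omega
    have h3 : (ordTot n α (β - Pi.single i 1) : ℤ) ≤ (ordTot n α β : ℤ) := by exact_mod_cast h2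
    omega

lemma wMono_mul_wd_mem (α β : Fin n → ℕ) (i : Fin n) :
    wMono n K α β * wd n K i ∈ bernW n K ((ordTot n α β : ℤ) + 1) := by
  rw [wMono_mul_wd]
  refine wMono_mem ?_
  have h2 : ordTot n α (β + Pi.single i 1) = ordTot n α β + 1 := by
    simp only [ordTot, sum_add_single]
    omega
  rw [h2]
  push_cast
  omega

lemma mul_right_mem_of_forall {b : WeylAlg n K} {r r' : ℤ}
    (hgen : ∀ α β : Fin n → ℕ, (ordTot n α β : ℤ) ≤ r → wMono n K α β * b ∈ bernW n K r')
    {a : WeylAlg n K} (ha : a ∈ bernW n K r) : a * b ∈ bernW n K r' := by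
  refine Submodule.span_induction (p := fun x _ => x * b ∈ bernW n K r') ?_ ?_ ?_ ?_ ha
  · rintro x ⟨α, β, hab, rfl⟩
    exact hgen α β hab
  · simp
  · intro x y _ _ hx hy
    rw [add_mul]; exact add_mem hx hy
  · intro c x _ hx
    rw [smul_mul_assoc]; exact Submodule.smul_mem _ _ hx

lemma mul_left_mem_of_forall {a : WeylAlg n K} {s r' : ℤ}
    (hgen : ∀ α β : Fin n → ℕ, (ordTot n α β : ℤ) ≤ s → a * wMono n K α β ∈ bernW n K r')
    {b : WeylAlg n K} (hb : b ∈ bernW n K s) : a * b ∈ bernW n K r' := by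
  refine Submodule.span_induction (p := fun x _ => a * x ∈ bernW n K r') ?_ ?_ ?_ ?_ hb
  · rintro x ⟨α, β, hab, rfl⟩
    exact hgen α β hab
  · simp
  · intro x y _ _ hx hy
    rw [mul_add]; exact add_mem hx hy
  · intro c x _ hx
    rw [mul_smul_comm]; exact Submodule.smul_mem _ _ hx

lemma wMono_mul_wMono_mem (k : ℕ) :
    ∀ (α β α' β' : Fin n → ℕ), ordTot n α' β' = k →
      wMono n K α β * wMono n K α' β' ∈ bernW n K ((ordTot n α β : ℤ) + k) := by
  induction k with
  | zero =>
    intro α β α' β' hord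
    have hα' : α' = 0 := by
      funext j
      simp only [ordTot, Nat.add_eq_zero] at hord
      have := (Finset.sum_eq_zero_iff).mp hord.1 j (Finset.mem_univ j)
      exact this
    have hβ' : β' = 0 := by
      funext j
      simp only [ordTot, Nat.add_eq_zero] at hord
      exact (Finset.sum_eq_zero_iff).mp hord.2 j (Finset.mem_univ j)
    subst hα' hβ'
    have h1 : wMono n K (0 : Fin n → ℕ) 0 = 1 := by
      rw [wMono_eq, Xp_zero, Dp_zero, mul_one]
    rw [h1, mul_one]
    exact wMono_mem (by push_cast; omega)
  | succ k ih =>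
    intro α β α' β' hord
    rcases eq_or_ne α' 0 with rfl | hα'
    · -- peel a wd
      have hβ' : ∃ i, β' i ≠ 0 := by
        by_contra hc
        push_neg at hc
        have : β' = 0 := funext fun j => hc j
        subst this
        simp [ordTot] at hord
      obtain ⟨i, hi⟩ := hβ'
      rw [wd_mul_wMono β' hi, ← mul_assoc]
      have h1 : wMono n K α β * wd n K i ∈ bernW n K ((ordTot n α β : ℤ) + 1) :=
        wMono_mul_wd_mem α β i
      have hord' : ordTot n 0 (β' - Pi.single i 1) = k := by
        have := sum_sub_single hi
        simp only [ordTot] at *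
        omega
      refine mul_right_mem_of_forall ?_ h1
      intro γ δ hγδ
      have := ih γ δ 0 (β' - Pi.single i 1) hord'
      refine bernW_mono ?_ this
      omega
    · -- peel a wx
      have : ∃ i, α' i ≠ 0 := by
        by_contra hc
        push_neg at hc
        exact hα' (funext fun j => hc j)
      obtain ⟨i, hi⟩ := this
      rw [wx_mul_wMono β' hi, ← mul_assoc]
      have h1 : wMono n K α β * wx n K i ∈ bernW n K ((ordTot n α β : ℤ) + 1) :=
        wMono_mul_wx_mem α β i
      have hord' : ordTot n (α' - Pi.single i 1) β' = k := by
        have := sum_sub_single hi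
        simp only [ordTot] at *
        omega
      refine mul_right_mem_of_forall ?_ h1
      intro γ δ hγδ
      have := ih γ δ (α' - Pi.single i 1) β' hord'
      refine bernW_mono ?_ this
      omega

lemma bernW_mul {r s : ℤ} {a b : WeylAlg n K} (ha : a ∈ bernW n K r) (hb : b ∈ bernW n K s) :
    a * b ∈ bernW n K (r + s) := by
  refine mul_right_mem_of_forall (r := r) ?_ ha
  intro α β hab
  refine mul_left_mem_of_forall (s := s) ?_ hb
  intro α' β' hab'
  have := wMono_mul_wMono_mem (n := n) (K := K) (ordTot n α' β') α β α' β' rfl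
  refine bernW_mono ?_ this
  omega

lemma bernW_one : (1 : WeylAlg n K) ∈ bernW n K 0 := by
  have h1 : wMono n K (0 : Fin n → ℕ) 0 = 1 := by
    rw [wMono_eq, Xp_zero, Dp_zero, mul_one]
  rw [← h1]
  exact wMono_mem (by simp [ordTot])

lemma bernW_exhaustive (a : WeylAlg n K) : ∃ r : ℕ, a ∈ bernW n K r := by
  refine Algebra.adjoin_induction (p := fun x hx => ∃ r : ℕ, (⟨x, hx⟩ : WeylAlg n K) ∈ bernW n K r) ?_ ?_ ?_ ?_ a.2
  · rintro x (⟨i, rfl⟩ | ⟨i, rfl⟩)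
    · refine ⟨1, ?_⟩
      have hx : (⟨_, Algebra.subset_adjoin (Set.mem_union_left _ ⟨i, rfl⟩)⟩ : WeylAlg n K) = wx n K i := rfl
      have h1 : wx n K i = wMono n K (Pi.single i 1) 0 := by
        rw [wMono_eq, Xp_single, Dp_zero, pow_one, mul_one]
      rw [hx, h1]
      refine wMono_mem ?_
      have := sum_single_one (n := n) i
      simp [ordTot, this]
    · refine ⟨1, ?_⟩
      have h1 : wd n K i = wMono n K 0 (Pi.single i 1) := by
        rw [wMono_eq, Dp_single, Xp_zero, pow_one, one_mul]
      have hx : (⟨_, Algebra.subset_adjoin (Set.mem_union_right _ ⟨i, rfl⟩)⟩ : WeylAlg n K) = wd n K i := rfl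
      rw [hx, h1]
      refine wMono_mem ?_
      have := sum_single_one (n := n) i
      simp [ordTot, this]
  · intro c
    refine ⟨0, ?_⟩
    change algebraMap K (WeylAlg n K) c ∈ _
    rw [Algebra.algebraMap_eq_smul_one]
    exact Submodule.smul_mem _ _ bernW_one
  · rintro x y _ _ ⟨r1, h1⟩ ⟨r2, h2⟩
    refine ⟨max r1 r2, add_mem (bernW_mono ?_ h1) (bernW_mono ?_ h2)⟩ <;> (push_cast; omega)
  · rintro x y _ _ ⟨r1, h1⟩ ⟨r2, h2⟩
    exact ⟨r1 + r2, by push_cast; exact bernW_mul h1 h2⟩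

variable {M : Type} [AddCommGroup M] [Module K M] [Module (WeylAlg n K) M]
  [IsScalarTower K (WeylAlg n K) M]

lemma modFil_eq_span (m : ℕ) (g : Fin m → M) (r : ℤ) :
    modFil n K M m g r = Submodule.span K
      ((fun p : Fin m × ((Fin n → ℕ) × (Fin n → ℕ)) => wMono n K p.2.1 p.2.2 • g p.1) ''
        {p | (ordTot n p.2.1 p.2.2 : ℤ) ≤ r}) := by
  apply le_antisymm
  · rw [modFil, Submodule.span_le]
    rintro x ⟨i, D, hD, rfl⟩
    refine Submodule.span_induction (p := fun D _ => D • g i ∈ Submodule.span K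
      ((fun p : Fin m × ((Fin n → ℕ) × (Fin n → ℕ)) => wMono n K p.2.1 p.2.2 • g p.1) ''
        {p | (ordTot n p.2.1 p.2.2 : ℤ) ≤ r})) ?_ ?_ ?_ ?_ hD
    · rintro D ⟨α, β, hab, rfl⟩
      exact Submodule.subset_span ⟨(i, (α, β)), hab, rfl⟩
    · show (0 : WeylAlg n K) • g i ∈ _
      rw [zero_smul]; exact Submodule.zero_mem _
    · intro x y _ _ hx hy
      show (x + y) • g i ∈ _
      rw [add_smul]; exact Submodule.add_mem _ hx hy
    · intro c x _ hx
      show (c • x) • g i ∈ _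
      rw [smul_assoc]; exact Submodule.smul_mem _ _ hx
  · rw [Submodule.span_le]
    rintro x ⟨⟨i, α, β⟩, hp, rfl⟩
    exact Submodule.subset_span ⟨i, wMono n K α β, wMono_mem hp, rfl⟩

lemma modFil_fd (m : ℕ) (g : Fin m → M) (r : ℤ) :
    FiniteDimensional K (modFil n K M m g r) := by
  rw [modFil_eq_span]
  apply FiniteDimensional.span_of_finite
  apply Set.Finite.image
  have hB : ({α : Fin n → ℕ | ∀ i, α i ≤ r.toNat}).Finite := by
    have : {α : Fin n → ℕ | ∀ i, α i ≤ r.toNat} ⊆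
        Set.pi Set.univ (fun _ : Fin n => Set.Iic r.toNat) := by
      intro α hα i _
      exact hα i
    exact (Set.Finite.pi fun _ => Set.finite_Iic _).subset this
  have hsub : {p : Fin m × ((Fin n → ℕ) × (Fin n → ℕ)) | (ordTot n p.2.1 p.2.2 : ℤ) ≤ r} ⊆
      (Set.univ : Set (Fin m)) ×ˢ (({α : Fin n → ℕ | ∀ i, α i ≤ r.toNat}) ×ˢ
        ({α : Fin n → ℕ | ∀ i, α i ≤ r.toNat})) := by
    rintro ⟨i, α, β⟩ hp
    simp only [Set.mem_setOf_eq] at hp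
    have hord : ordTot n α β ≤ r.toNat := by omega
    refine ⟨Set.mem_univ _, fun j => ?_, fun j => ?_⟩
    · show α j ≤ r.toNat
      have h1 : α j ≤ ∑ i, α i := Finset.single_le_sum (fun i _ => Nat.zero_le (α i)) (Finset.mem_univ j)
      simp only [ordTot] at hord
      omega
    · show β j ≤ r.toNat
      have h1 : β j ≤ ∑ i, β i := Finset.single_le_sum (fun i _ => Nat.zero_le (β i)) (Finset.mem_univ j)
      simp only [ordTot] at hord
      omega
  exact ((Set.finite_univ.prod (hB.prod hB))).subset hsub

lemma modFil_shift (mm qq : ℕ) (g : Fin mm → M) (h : Fin qq → M)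
    (hg : Submodule.span (WeylAlg n K) (Set.range g) = ⊤) :
    ∃ c : ℕ, ∀ r : ℤ, modFil n K M qq h r ≤ modFil n K M mm g (r + c) := by
  have hmem : ∀ j, ∃ D : Fin mm → WeylAlg n K, ∑ k, D k • g k = h j := by
    intro j
    have : h j ∈ Submodule.span (WeylAlg n K) (Set.range g) := by rw [hg]; trivial
    obtain ⟨cf, hcf⟩ := Finsupp.mem_span_range_iff_exists_finsupp.mp this
    refine ⟨fun k => cf k, ?_⟩
    rw [← hcf]
    rw [Finsupp.sum_fintype _ _ (fun k => zero_smul (WeylAlg n K) (g k))]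
  choose D hD using hmem
  have hb : ∀ j k, ∃ c : ℕ, D j k ∈ bernW n K c := fun j k => bernW_exhaustive (D j k)
  choose cb hcb using hb
  set c : ℕ := Finset.sup Finset.univ (fun p : Fin qq × Fin mm => cb p.1 p.2) with hc
  refine ⟨c, fun r => ?_⟩
  rw [modFil, Submodule.span_le]
  rintro x ⟨j, E, hE, rfl⟩
  rw [← hD j, Finset.smul_sum]
  refine Submodule.sum_mem _ fun k _ => ?_
  rw [smul_smul]
  refine Submodule.subset_span ⟨k, E * D j k, ?_, rfl⟩
  have h1 : E * D j k ∈ bernW n K (r + cb j k) := bernW_mul hE (hcb j k)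
  refine bernW_mono ?_ h1
  have : cb j k ≤ c := Finset.le_sup (f := fun p : Fin qq × Fin mm => cb p.1 p.2)
    (Finset.mem_univ (j, k))
  omega

section PolyPart
open Polynomial Filter

lemma poly_nonneg_lead (p : Polynomial ℚ) (s : ℤ) (hp : ∀ r : ℤ, s ≤ r → 0 ≤ p.eval (r : ℚ)) :
    p = 0 ∨ 0 < p.leadingCoeff := by
  by_contra hc
  push_neg at hc
  obtain ⟨hp0, hl⟩ := hc
  have hl' : p.leadingCoeff < 0 := lt_of_le_of_ne hl (leadingCoeff_ne_zero.mpr hp0)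
  rcases eq_or_lt_of_le (Nat.zero_le p.natDegree) with hd | hd
  · -- constant polynomial
    have := p.eq_C_of_natDegree_eq_zero hd.symm
    have h1 := hp s le_rfl
    rw [this] at h1
    simp only [Polynomial.eval_C] at h1
    rw [this] at hl'
    simp only [leadingCoeff, Polynomial.natDegree_C, Polynomial.coeff_C_zero] at hl'
    -- hl' : p.coeff 0 < 0 vs h1 : 0 ≤ p.coeff 0
    exact absurd h1 (not_le.mpr hl')
  · have hdeg : 0 < (-p).degree := by
      rw [degree_neg]
      exact natDegree_pos_iff_degree_pos.mp hd
    have hlc : 0 ≤ (-p).leadingCoeff := by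
      rw [leadingCoeff_neg]; linarith
    have ht : Tendsto (fun x : ℚ => (-p).eval x) atTop atTop :=
      tendsto_atTop_of_leadingCoeff_nonneg (-p) hdeg hlc
    have ht2 : Tendsto (fun r : ℤ => (-p).eval (r : ℚ)) atTop atTop :=
      ht.comp tendsto_intCast_atTop_atTop
    obtain ⟨r0, hr0⟩ := (ht2.eventually_ge_atTop 1).exists_forall_of_atTop
    set r := max r0 s with hr
    have h1 : (1 : ℚ) ≤ (-p).eval (r : ℚ) := hr0 r (le_max_left _ _)
    have h2 : 0 ≤ p.eval (r : ℚ) := hp r (le_max_right _ _)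
    rw [Polynomial.eval_neg] at h1
    linarith

lemma poly_eq_zero_of_Polynomial.eval_zero (p : Polynomial ℚ) (s : ℤ)
    (hp : ∀ r : ℤ, s ≤ r → p.eval (r : ℚ) = 0) : p = 0 := by
  rcases poly_nonneg_lead p s (fun r hr => (hp r hr).ge) with h | h
  · exact h
  rcases poly_nonneg_lead (-p) s (fun r hr => by simp [hp r hr]) with h' | h'
  · simpa using h'
  rw [leadingCoeff_neg] at h'
  linarith

lemma shift_natDegree (f : Polynomial ℚ) (c : ℚ) :
    (f.comp (Polynomial.X + Polynomial.C c)).natDegree = f.natDegree := by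
  rw [natDegree_comp]
  simp

lemma shift_leadingCoeff (f : Polynomial ℚ) (c : ℚ) :
    (f.comp (Polynomial.X + Polynomial.C c)).leadingCoeff = f.leadingCoeff := by
  rcases eq_or_ne f 0 with rfl | hf
  · simp
  rw [leadingCoeff_comp (by simp : (Polynomial.X + Polynomial.C c).natDegree ≠ 0)]
  simp

lemma shift_eval (f : Polynomial ℚ) (c x : ℚ) :
    (f.comp (Polynomial.X + Polynomial.C c)).eval x = f.eval (x + c) := by
  simp [eval_comp]


lemma deg_le_of_shift (f g : Polynomial ℚ) (c : ℕ) (s : ℤ)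
    (hfg : ∀ r : ℤ, s ≤ r → g.eval (r : ℚ) ≤ f.eval ((r : ℚ) + c))
    (hg : 0 < g.leadingCoeff) :
    g.natDegree ≤ f.natDegree ∧
      (g.natDegree = f.natDegree → g.leadingCoeff ≤ f.leadingCoeff) := by
  set F := f.comp (Polynomial.X + Polynomial.C (c : ℚ)) with hF
  have hFd : F.natDegree = f.natDegree := shift_natDegree f c
  have hFl : F.leadingCoeff = f.leadingCoeff := shift_leadingCoeff f c
  set h := F - g with hh
  have hev : ∀ r : ℤ, s ≤ r → 0 ≤ h.eval (r : ℚ) := by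
    intro r hr
    simp only [hh, Polynomial.eval_sub, hF, shift_eval]
    linarith [hfg r hr]
  have hg0 : g ≠ 0 := fun h' => by simp [h'] at hg
  rcases poly_nonneg_lead h s hev with h0 | hl
  · have hFg : F = g := by rwa [sub_eq_zero] at h0
    exact ⟨le_of_eq (by rw [← hFg, hFd]), fun _ => le_of_eq (by rw [← hFg, hFl])⟩
  constructor
  · by_contra hlt
    push_neg at hlt
    have hcoeff : h.coeff g.natDegree = -g.leadingCoeff := by
      rw [hh, Polynomial.coeff_sub, coeff_eq_zero_of_natDegree_lt (hFd ▸ hlt), leadingCoeff]; ring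
    have hne : h.coeff g.natDegree ≠ 0 := by
      rw [hcoeff, neg_ne_zero]; exact ne_of_gt hg
    have h1 : g.natDegree ≤ h.natDegree := le_natDegree_of_ne_zero hne
    have h2 : h.natDegree ≤ g.natDegree := by
      calc h.natDegree ≤ max F.natDegree g.natDegree := natDegree_sub_le _ _
        _ ≤ g.natDegree := by rw [hFd]; exact max_le (le_of_lt hlt) le_rfl
    have : h.leadingCoeff = -g.leadingCoeff := by
      rw [leadingCoeff, le_antisymm h2 h1, hcoeff]
    rw [this] at hl; linarith
  · intro hd
    by_contra hlc
    push_neg at hlc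
    have hcoeff : h.coeff g.natDegree = f.leadingCoeff - g.leadingCoeff := by
      rw [hh, Polynomial.coeff_sub]
      have : F.coeff g.natDegree = F.leadingCoeff := by rw [leadingCoeff, hFd, ← hd]
      rw [this, hFl]; rfl
    have hne : h.coeff g.natDegree ≠ 0 := by rw [hcoeff]; intro h'; linarith [sub_eq_zero.mp h']
    have h1 : g.natDegree ≤ h.natDegree := le_natDegree_of_ne_zero hne
    have h2 : h.natDegree ≤ g.natDegree := by
      calc h.natDegree ≤ max F.natDegree g.natDegree := natDegree_sub_le _ _
        _ ≤ g.natDegree := by rw [hFd, ← hd]; exact max_le le_rfl le_rfl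
    have : h.leadingCoeff = f.leadingCoeff - g.leadingCoeff := by
      rw [leadingCoeff, le_antisymm h2 h1, hcoeff]
    rw [this] at hl; linarith


lemma poly_compare (f g : Polynomial ℚ) (c₁ c₂ : ℕ) (s : ℤ)
    (hfpos : ∀ r : ℤ, s ≤ r → 0 ≤ f.eval (r : ℚ))
    (hfg : ∀ r : ℤ, s ≤ r → f.eval (r : ℚ) ≤ g.eval ((r : ℚ) + c₁))
    (hgf : ∀ r : ℤ, s ≤ r → g.eval (r : ℚ) ≤ f.eval ((r : ℚ) + c₂)) :
    f.natDegree = g.natDegree ∧ f.leadingCoeff = g.leadingCoeff := by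
  have hgpos : ∀ r : ℤ, s + c₁ ≤ r → 0 ≤ g.eval (r : ℚ) := by
    intro r hr
    have h1 : s ≤ r - c₁ := by omega
    have := (hfpos _ h1).trans (hfg _ h1)
    have hcast : ((r - (c₁:ℤ) : ℤ) : ℚ) + (c₁ : ℚ) = (r : ℚ) := by push_cast; ring
    rwa [hcast] at this
  rcases eq_or_ne f 0 with rfl | hf0
  · have hgz : g = 0 := by
      apply poly_eq_zero_of_Polynomial.eval_zero g (s + c₁)
      intro r hr
      have h1 : s ≤ r := by omega
      have h2 := hgf r h1
      simp only [Polynomial.eval_zero] at h2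
      have h3 := hgpos r hr
      linarith
    simp [hgz]
  have hlf : 0 < f.leadingCoeff := by
    rcases poly_nonneg_lead f s hfpos with h | h
    · exact absurd h hf0
    · exact h
  have hg0 : g ≠ 0 := by
    intro hgz
    apply hf0
    apply poly_eq_zero_of_Polynomial.eval_zero f s
    intro r hr
    have h2 := hfg r hr
    rw [hgz] at h2
    simp only [Polynomial.eval_zero] at h2
    linarith [hfpos r hr]
  have hlg : 0 < g.leadingCoeff := by
    rcases poly_nonneg_lead g (s + c₁) hgpos with h | h
    · exact absurd h hg0
    · exact h
  obtain ⟨hd1, hl1⟩ := deg_le_of_shift g f c₁ s hfg hlf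
  obtain ⟨hd2, hl2⟩ := deg_le_of_shift f g c₂ s hgf hlg
  have hd : f.natDegree = g.natDegree := le_antisymm hd1 hd2
  exact ⟨hd, le_antisymm (hl1 hd) (hl2 hd.symm)⟩

end PolyPart

theorem statement_7 (n : ℕ) (K : Type) [Field K] [CharZero K]
    (M : Type) [AddCommGroup M] [Module K M] [Module (WeylAlg n K) M]
    [IsScalarTower K (WeylAlg n K) M]
    (m q : ℕ) (g : Fin m → M) (h : Fin q → M)
    (hg : Submodule.span (WeylAlg n K) (Set.range g) = ⊤)
    (hh : Submodule.span (WeylAlg n K) (Set.range h) = ⊤)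
    (ψ ψ' : Polynomial ℚ)
    (hψ : ∃ s : ℤ, ∀ r : ℤ, s ≤ r →
      ψ.eval (r : ℚ) = (Module.finrank K (modFil n K M m g r) : ℚ))
    (hψ' : ∃ s : ℤ, ∀ r : ℤ, s ≤ r →
      ψ'.eval (r : ℚ) = (Module.finrank K (modFil n K M q h r) : ℚ)) :
    ψ.natDegree = ψ'.natDegree ∧
      (ψ.natDegree.factorial : ℚ) * ψ.leadingCoeff =
        (ψ'.natDegree.factorial : ℚ) * ψ'.leadingCoeff := by
  obtain ⟨s1, hs1⟩ := hψ
  obtain ⟨s2, hs2⟩ := hψ'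
  obtain ⟨c₁, hc₁⟩ := modFil_shift q m h g hh
  obtain ⟨c₂, hc₂⟩ := modFil_shift m q g h hg
  set s : ℤ := max s1 s2 with hs
  have key := poly_compare ψ ψ' c₁ c₂ s ?_ ?_ ?_
  · exact ⟨key.1, by rw [key.1, key.2]⟩
  · intro r hr
    rw [hs1 r (by omega)]
    exact Nat.cast_nonneg _
  · intro r hr
    rw [hs1 r (by omega)]
    have he : ((r + (c₁ : ℤ) : ℤ) : ℚ) = (r : ℚ) + (c₁ : ℚ) := by push_cast; ring
    have h2 := hs2 (r + c₁) (by omega)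
    rw [he] at h2
    rw [h2]
    have : FiniteDimensional K (modFil n K M q h (r + c₁)) := modFil_fd q h (r + c₁)
    exact_mod_cast Nat.cast_le.mpr (Submodule.finrank_mono (hc₁ r))
  · intro r hr
    rw [hs2 r (by omega)]
    have he : ((r + (c₂ : ℤ) : ℤ) : ℚ) = (r : ℚ) + (c₂ : ℚ) := by push_cast; ring
    have h2 := hs1 (r + c₂) (by omega)
    rw [he] at h2
    rw [h2]
    have : FiniteDimensional K (modFil n K M m g (r + c₂)) := modFil_fd m g (r + c₂)
    exact_mod_cast Nat.cast_le.mpr (Submodule.finrank_mono (hc₂ r))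
end

section
/- Let K be a field of characteristic zero and A_n(K) the Weyl algebra. Fix a partition of {1,…,n} into consecutive blocks N_1,…,N_p of sizes n_1,…,n_p. Let θ = x^α∂^β and θ' = x^γ∂^δ be monomials with θ | θ' (i.e., α_i ≤ γ_i and β_i ≤ δ_i for all i). Then, computing the product in A_n(K), there exist monomials θ_0, θ_1, …, θ_k such that θ' = θ_0·θ − Σ_{i=1}^{k} c_i θ_i (for some nonzero constants c_i ∈ K) where: ord_j θ_0 + ord_j θ = ord_j θ' for j = 1,…,p, and moreover |θ_0|_{xj} + |θ|_{xj} = |θ'|_{xj} and |θ_0|_{∂j} + |θ|_{∂j} = |θ'|_{∂j} for all j; while for each i = 1,…,k, ord θ_i < ord θ', ord_j θ_i ≤ ord_j θ' for all j = 1,…,p, and ord_{j_0} θ_i < ord_{j_0} θ' for at least one j_0 ∈ {1,…,p}. -/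
set_option synthInstance.maxHeartbeats 400000
set_option maxHeartbeats 1000000

open MvPolynomial

/-- The `j`-th order of the monomial `x^α ∂^β` with respect to the partition `B`. -/
def ordBlk {n p : ℕ} (B : Fin n → Fin p) (α β : Fin n → ℕ) (j : Fin p) : ℕ :=
  ∑ i ∈ Finset.univ.filter (fun i => B i = j), (α i + β i)

namespace WeylAux

set_option linter.unusedSectionVars false
variable (n : ℕ) (K : Type) [Field K] [CharZero K]

lemma wd_mul_wx (i j : Fin n) :
    wd n K i * wx n K j = wx n K j * wd n K i + (if i = j then 1 else 0) := by
  rcases eq_or_ne i j with h | h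
  · subst h
    rw [if_pos rfl]
    apply Subtype.ext; apply LinearMap.ext; intro f
    simp only [Subalgebra.coe_add, Subalgebra.coe_mul, Subalgebra.coe_one, LinearMap.add_apply,
      Module.End.mul_apply, Module.End.one_apply, wd, wx, LinearMap.mulLeft_apply]
    show pderiv i (X i * f) = X i * pderiv i f + f
    rw [pderiv_mul, pderiv_X_self, one_mul, add_comm]
  · rw [if_neg h]
    apply Subtype.ext; apply LinearMap.ext; intro f
    simp only [Subalgebra.coe_add, Subalgebra.coe_mul, Subalgebra.coe_zero, LinearMap.add_apply,
      Module.End.mul_apply, LinearMap.zero_apply, wd, wx, LinearMap.mulLeft_apply]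
    show pderiv i (X j * f) = X j * pderiv i f + (0 : Module.End K _) f
    rw [pderiv_mul, pderiv_X_of_ne (Ne.symm h)]
    simp

lemma comm_xx (i j : Fin n) : Commute (wx n K i) (wx n K j) := by
  apply Subtype.ext
  apply LinearMap.ext
  intro f
  show X i * (X j * f) = X j * (X i * f)
  ring

lemma comm_dd (i j : Fin n) : Commute (wd n K i) (wd n K j) := by
  apply Subtype.ext
  apply LinearMap.ext
  intro f
  show pderiv i (pderiv j f) = pderiv j (pderiv i f)
  induction f using MvPolynomial.induction_on with
  | C a => simp [pderiv_C]
  | add p q hp hq => simp [hp, hq]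
  | mul_X p k ih => rcases eq_or_ne i k with h|h <;> rcases eq_or_ne j k with h2|h2 <;>
      subst_vars <;> simp_all [pderiv_mul, Pi.single_apply, mul_comm, add_comm]

lemma comm_dx {i j : Fin n} (h : i ≠ j) : Commute (wd n K i) (wx n K j) := by
  have := wd_mul_wx n K i j
  simp [h] at this
  exact this


noncomputable def Xl (α : Fin n → ℕ) (l : List (Fin n)) : WeylAlg n K :=
  (l.map fun i => wx n K i ^ α i).prod

noncomputable def Dl (β : Fin n → ℕ) (l : List (Fin n)) : WeylAlg n K :=
  (l.map fun i => wd n K i ^ β i).prod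

@[simp] lemma Xl_nil (α : Fin n → ℕ) : Xl n K α [] = 1 := rfl
@[simp] lemma Dl_nil (β : Fin n → ℕ) : Dl n K β [] = 1 := rfl

@[simp] lemma Xl_cons (α : Fin n → ℕ) (i : Fin n) (l : List (Fin n)) :
    Xl n K α (i :: l) = wx n K i ^ α i * Xl n K α l := by simp [Xl]

@[simp] lemma Dl_cons (β : Fin n → ℕ) (i : Fin n) (l : List (Fin n)) :
    Dl n K β (i :: l) = wd n K i ^ β i * Dl n K β l := by simp [Dl]

lemma comm_x_Xl (i : Fin n) (α : Fin n → ℕ) (l : List (Fin n)) :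
    Commute (wx n K i) (Xl n K α l) := by
  induction l with
  | nil => exact Commute.one_right _
  | cons j l ih => simpa using ((comm_xx n K i j).pow_right _).mul_right ih

lemma comm_d_Dl (i : Fin n) (β : Fin n → ℕ) (l : List (Fin n)) :
    Commute (wd n K i) (Dl n K β l) := by
  induction l with
  | nil => exact Commute.one_right _
  | cons j l ih => simpa using ((comm_dd n K i j).pow_right _).mul_right ih

lemma comm_d_Xl {i : Fin n} (α : Fin n → ℕ) {l : List (Fin n)} (h : i ∉ l) :
    Commute (wd n K i) (Xl n K α l) := by
  induction l with
  | nil => exact Commute.one_right _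
  | cons j l ih =>
    simp only [List.mem_cons, not_or] at h
    simpa using ((comm_dx n K h.1).pow_right _).mul_right (ih h.2)

lemma Xl_congr {α α' : Fin n → ℕ} {l : List (Fin n)} (h : ∀ i ∈ l, α i = α' i) :
    Xl n K α l = Xl n K α' l := by
  induction l with
  | nil => rfl
  | cons j l ih => simp [h j (by simp), ih fun i hi => h i (by simp [hi])]

lemma Dl_congr {β β' : Fin n → ℕ} {l : List (Fin n)} (h : ∀ i ∈ l, β i = β' i) :
    Dl n K β l = Dl n K β' l := by
  induction l with
  | nil => rfl
  | cons j l ih => simp [h j (by simp), ih fun i hi => h i (by simp [hi])]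

@[simp] lemma Xl_zero (l : List (Fin n)) : Xl n K 0 l = 1 := by
  induction l with
  | nil => rfl
  | cons j l ih => simp [ih]

@[simp] lemma Dl_zero (l : List (Fin n)) : Dl n K 0 l = 1 := by
  induction l with
  | nil => rfl
  | cons j l ih => simp [ih]

lemma Xl_eq_one {v : Fin n → ℕ} {l : List (Fin n)} (h : ∀ i ∈ l, v i = 0) :
    Xl n K v l = 1 :=
  (Xl_congr n K (α' := 0) h).trans (Xl_zero n K l)

lemma Dl_eq_one {v : Fin n → ℕ} {l : List (Fin n)} (h : ∀ i ∈ l, v i = 0) :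
    Dl n K v l = 1 :=
  (Dl_congr n K (β' := 0) h).trans (Dl_zero n K l)

lemma Xl_add (α α' : Fin n → ℕ) (l : List (Fin n)) :
    Xl n K (α + α') l = Xl n K α l * Xl n K α' l := by
  induction l with
  | nil => simp
  | cons j l ih =>
    simp only [Xl_cons, Pi.add_apply, pow_add, ih]
    rw [mul_assoc, mul_assoc, ← mul_assoc (wx n K j ^ α' j),
      ((comm_x_Xl n K j α l).pow_left _).eq, mul_assoc]

lemma Dl_add (β β' : Fin n → ℕ) (l : List (Fin n)) :
    Dl n K (β + β') l = Dl n K β l * Dl n K β' l := by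
  induction l with
  | nil => simp
  | cons j l ih =>
    simp only [Dl_cons, Pi.add_apply, pow_add, ih]
    rw [mul_assoc, mul_assoc, ← mul_assoc (wd n K j ^ β' j),
      ((comm_d_Dl n K j β l).pow_left _).eq, mul_assoc]

lemma Xl_single {j : Fin n} {l : List (Fin n)} (hj : j ∈ l) (hd : l.Nodup) :
    Xl n K (Pi.single j 1) l = wx n K j := by
  induction l with
  | nil => cases hj
  | cons i l ih =>
    rcases List.mem_cons.mp hj with h | h
    · subst h
      have hnot : j ∉ l := (List.nodup_cons.mp hd).1
      rw [Xl_cons, Xl_eq_one n K fun i hi =>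
        Pi.single_eq_of_ne (by rintro rfl; exact hnot hi) _]
      simp
    · have hne : i ≠ j := by rintro rfl; exact (List.nodup_cons.mp hd).1 h
      rw [Xl_cons, Pi.single_eq_of_ne hne, pow_zero, one_mul,
        ih h (List.nodup_cons.mp hd).2]

lemma Dl_single {j : Fin n} {l : List (Fin n)} (hj : j ∈ l) (hd : l.Nodup) :
    Dl n K (Pi.single j 1) l = wd n K j := by
  induction l with
  | nil => cases hj
  | cons i l ih =>
    rcases List.mem_cons.mp hj with h | h
    · subst h
      have hnot : j ∉ l := (List.nodup_cons.mp hd).1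
      rw [Dl_cons, Dl_eq_one n K fun i hi =>
        Pi.single_eq_of_ne (by rintro rfl; exact hnot hi) _]
      simp
    · have hne : i ≠ j := by rintro rfl; exact (List.nodup_cons.mp hd).1 h
      rw [Dl_cons, Pi.single_eq_of_ne hne, pow_zero, one_mul,
        ih h (List.nodup_cons.mp hd).2]

lemma d_pow_succ (i : Fin n) (m : ℕ) :
    wd n K i * wx n K i ^ (m + 1)
      = wx n K i ^ (m + 1) * wd n K i + (m + 1) • wx n K i ^ m := by
  induction m with
  | zero => simpa using wd_mul_wx n K i i
  | succ m ih =>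
    have h1 : wd n K i * wx n K i ^ (m + 2)
        = (wx n K i * wd n K i + 1) * wx n K i ^ (m + 1) := by
      rw [pow_succ' (wx n K i) (m + 1), ← mul_assoc, wd_mul_wx n K i i, if_pos rfl]
    rw [h1, add_mul, one_mul, mul_assoc, ih, mul_add, ← mul_assoc,
      ← pow_succ' (wx n K i), mul_smul_comm, ← pow_succ']
    rw [add_assoc, succ_nsmul (wx n K i ^ (m+1)) (m+1)]

lemma d_Xl {i : Fin n} (α : Fin n → ℕ) {l : List (Fin n)} (hi : i ∈ l) (hd : l.Nodup) :
    wd n K i * Xl n K α l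
      = Xl n K α l * wd n K i + α i • Xl n K (α - Pi.single i 1) l := by
  induction l with
  | nil => cases hi
  | cons j l ih =>
    rcases List.mem_cons.mp hi with h | h
    · subst h
      have hnot : i ∉ l := (List.nodup_cons.mp hd).1
      have h2 : Xl n K (α - Pi.single i 1) l = Xl n K α l :=
        Xl_congr n K fun t ht => by
          rw [Pi.sub_apply, Pi.single_eq_of_ne (by rintro rfl; exact hnot ht), Nat.sub_zero]
      have h3 : (α - Pi.single i 1 : Fin n → ℕ) i = α i - 1 := by simp
      rw [Xl_cons, ← mul_assoc, Xl_cons, h2, h3]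
      rcases Nat.eq_zero_or_pos (α i) with h0 | h0
      · simp [h0, (comm_d_Xl n K α hnot).eq]
      · obtain ⟨m, hm⟩ : ∃ m, α i = m + 1 := ⟨α i - 1, (Nat.succ_pred_eq_of_pos h0).symm⟩
        rw [hm, d_pow_succ, add_mul, smul_mul_assoc, mul_assoc,
          (comm_d_Xl n K α hnot).eq, ← mul_assoc]
        simp [mul_assoc]
    · have hnotj : j ∉ l := (List.nodup_cons.mp hd).1
      have hne : i ≠ j := by rintro rfl; exact hnotj h
      have hαj : (α - Pi.single i 1 : Fin n → ℕ) j = α j := by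
        rw [Pi.sub_apply, Pi.single_eq_of_ne (Ne.symm hne), Nat.sub_zero]
      rw [Xl_cons, ← mul_assoc, ((comm_dx n K hne).pow_right _).eq, mul_assoc,
        ih h (List.nodup_cons.mp hd).2, mul_add, ← mul_assoc, mul_smul_comm,
        Xl_cons, hαj]

lemma sum_map_mul_right {τ : Type} (l : List τ) (f : τ → WeylAlg n K) (w : WeylAlg n K) :
    (l.map f).sum * w = (l.map fun e => f e * w).sum := by
  induction l with
  | nil => simp
  | cons a l ih => simp [add_mul, ih]

lemma mul_sum_map {τ : Type} (l : List τ) (f : τ → WeylAlg n K) (w : WeylAlg n K) :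
    w * (l.map f).sum = (l.map fun e => w * f e).sum := by
  induction l with
  | nil => simp
  | cons a l ih => simp [mul_add, ih]

lemma smul_sum_map {τ : Type} (l : List τ) (f : τ → WeylAlg n K) (c : K) :
    c • (l.map f).sum = (l.map fun e => c • f e).sum := by
  induction l with
  | nil => simp
  | cons a l ih => simp [smul_add, ih]

lemma sum_map_congr {τ : Type} {l : List τ} {f g : τ → WeylAlg n K}
    (h : ∀ e ∈ l, f e = g e) : (l.map f).sum = (l.map g).sum := by
  rw [List.map_congr_left h]

lemma sub_single_add {v : Fin n → ℕ} {j : Fin n} (h : v j ≠ 0) :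
    (v - Pi.single j 1 : Fin n → ℕ) + Pi.single j 1 = v := funext fun i => by
  rcases eq_or_ne i j with rfl | hne
  · simp [Nat.sub_add_cancel (Nat.one_le_iff_ne_zero.mpr h)]
  · simp [Pi.single_eq_of_ne hne]

lemma sum_add_single (v : Fin n → ℕ) (j : Fin n) :
    ∑ i, (v + Pi.single j 1 : Fin n → ℕ) i = (∑ i, v i) + 1 := by
  simp [Pi.add_apply, Finset.sum_add_distrib, Finset.sum_pi_single']

lemma sub_single_sum {v : Fin n → ℕ} {j : Fin n} (h : v j ≠ 0) :
    (∑ i, (v - Pi.single j 1 : Fin n → ℕ) i) + 1 = ∑ i, v i := by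
  conv_rhs => rw [← sub_single_add n (v := v) h]
  rw [sum_add_single]


lemma wMono_eq (α β : Fin n → ℕ) :
    wMono n K α β = Xl n K α (List.finRange n) * Dl n K β (List.finRange n) := rfl

lemma fin_sum_list {τ : Type} (E : List τ) (f : τ → WeylAlg n K) :
    ∑ i : Fin E.length, f (E.get i) = (E.map f).sum := by
  conv_rhs => rw [← List.ofFn_get E]
  rw [List.map_ofFn, Fin.sum_ofFn]
  rfl

lemma main (s : ℕ) (β₀ α : Fin n → ℕ) (hs : (∑ i, β₀ i) = s) :
    ∃ E : List ((Fin n → ℕ) × (Fin n → ℕ) × K),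
      Dl n K β₀ (List.finRange n) * Xl n K α (List.finRange n)
        = Xl n K α (List.finRange n) * Dl n K β₀ (List.finRange n)
          + (E.map fun e =>
              e.2.2 • (Xl n K e.1 (List.finRange n) * Dl n K e.2.1 (List.finRange n))).sum
      ∧ ∀ e ∈ E, e.2.2 ≠ 0 ∧ e.1 ≤ α ∧ e.2.1 ≤ β₀ ∧
          (∑ i, e.1 i) + (∑ i, e.2.1 i) < (∑ i, α i) + (∑ i, β₀ i) := by
  induction s generalizing β₀ α with
  | zero =>
    have hb : β₀ = 0 := funext fun i =>
      Finset.sum_eq_zero_iff.mp hs i (Finset.mem_univ i)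
    subst hb
    exact ⟨[], by simp, by simp⟩
  | succ s ih =>
    have hj' : ∃ j, β₀ j ≠ 0 := by
      by_contra h
      push_neg at h
      rw [Finset.sum_eq_zero fun i _ => h i] at hs
      exact (Nat.succ_ne_zero s) hs.symm
    obtain ⟨j, hj⟩ := hj'
    have hjm : j ∈ List.finRange n := List.mem_finRange j
    have hnd : (List.finRange n).Nodup := List.nodup_finRange n
    set β' := β₀ - Pi.single j 1 with hβ'def
    have hβ : β' + Pi.single j 1 = β₀ := sub_single_add n hj
    have hβle : β' ≤ β₀ := fun i => by simp [hβ'def, Nat.sub_le]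
    have hsum1 : (∑ i, β' i) + 1 = ∑ i, β₀ i := sub_single_sum n hj
    have hs' : ∑ i, β' i = s := by omega
    have key : Dl n K β₀ (List.finRange n) * Xl n K α (List.finRange n)
        = (Dl n K β' (List.finRange n) * Xl n K α (List.finRange n)) * wd n K j
          + α j • (Dl n K β' (List.finRange n)
              * Xl n K (α - Pi.single j 1) (List.finRange n)) := by
      rw [← hβ, Dl_add, Dl_single n K hjm hnd, mul_assoc, d_Xl n K α hjm hnd,
        mul_add, ← mul_assoc, mul_smul_comm]
    obtain ⟨E1, hE1, hE1c⟩ := ih β' α hs'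
    obtain ⟨E2, hE2, hE2c⟩ := ih β' (α - Pi.single j 1) hs'
    have hDβ : ∀ b : Fin n → ℕ,
        Dl n K b (List.finRange n) * wd n K j
          = Dl n K (b + Pi.single j 1) (List.finRange n) := fun b => by
      rw [Dl_add, Dl_single n K hjm hnd]
    have hE1good : ∀ e' ∈ E1,
        (e'.2.1 + Pi.single j 1 : Fin n → ℕ) ≤ β₀ ∧
        (∑ i, e'.1 i) + (∑ i, (e'.2.1 + Pi.single j 1 : Fin n → ℕ) i)
          < (∑ i, α i) + ∑ i, β₀ i := by
      intro e' he'
      obtain ⟨hc, ha, hb, hlt⟩ := hE1c e' he'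
      constructor
      · intro i
        have hbi := hb i
        have h2 := congrFun hβ i
        simp only [hβ'def, Pi.sub_apply, Pi.add_apply] at hbi h2 ⊢
        rcases eq_or_ne i j with rfl | h
        · simp only [Pi.single_eq_same] at hbi h2 ⊢
          omega
        · simp only [Pi.single_eq_of_ne h] at hbi h2 ⊢
          omega
      · rw [sum_add_single]
        omega
    rcases Nat.eq_zero_or_pos (α j) with h0 | h0
    · -- α j = 0 : second term vanishes
      refine ⟨E1.map fun e => (e.1, e.2.1 + Pi.single j 1, e.2.2), ?_, ?_⟩
      · rw [key, h0, zero_smul, add_zero, hE1, add_mul, mul_assoc, hDβ,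
          sum_map_mul_right, ← hβ, List.map_map]
        congr 1
        apply sum_map_congr
        intro e _
        simp only [Function.comp]
        rw [smul_mul_assoc, mul_assoc, hDβ]
      · intro e he
        simp only [List.mem_map] at he
        obtain ⟨e', he', rfl⟩ := he
        obtain ⟨hc, ha, hb, hlt⟩ := hE1c e' he'
        exact ⟨hc, ha, (hE1good e' he').1, (hE1good e' he').2⟩
    · -- α j ≥ 1
      have hαsum : (∑ i, (α - Pi.single j 1 : Fin n → ℕ) i) + 1 = ∑ i, α i :=
        sub_single_sum n (Nat.pos_iff_ne_zero.mp h0)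
      refine ⟨(E1.map fun e => (e.1, e.2.1 + Pi.single j 1, e.2.2))
          ++ ((α - Pi.single j 1, β', (α j : K))
              :: E2.map fun e => (e.1, e.2.1, (α j : K) * e.2.2)), ?_, ?_⟩
      · rw [key, hE1, hE2, add_mul, mul_assoc, hDβ, sum_map_mul_right, ← hβ,
          List.map_append, List.sum_append, List.map_map, List.map_cons, List.map_map,
          List.sum_cons]
        rw [← Nat.cast_smul_eq_nsmul K (α j), smul_add, smul_sum_map]
        rw [add_assoc]
        congr 2
        · apply sum_map_congr
          intro e _
          simp only [Function.comp]
          rw [smul_mul_assoc, mul_assoc, hDβ]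
        · congr 1
          apply sum_map_congr
          intro e _
          simp only [Function.comp]
          rw [smul_smul]
      · intro e he
        simp only [List.mem_append, List.mem_map, List.mem_cons] at he
        rcases he with ⟨e', he', rfl⟩ | (rfl | ⟨e', he', rfl⟩)
        · obtain ⟨hc, ha, hb, hlt⟩ := hE1c e' he'
          exact ⟨hc, ha, (hE1good e' he').1, (hE1good e' he').2⟩
        · refine ⟨Nat.cast_ne_zero.mpr (Nat.pos_iff_ne_zero.mp h0),
            fun i => by simp [Nat.sub_le], hβle, by dsimp only; omega⟩
        · obtain ⟨hc, ha, hb, hlt⟩ := hE2c e' he'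
          refine ⟨mul_ne_zero (Nat.cast_ne_zero.mpr (Nat.pos_iff_ne_zero.mp h0)) hc,
            fun i => (ha i).trans (Nat.sub_le _ _), fun i => (hb i).trans (hβle i),
            by dsimp only; omega⟩

end WeylAux

theorem statement_11 (n p : ℕ) (hp : 1 ≤ p) (K : Type) [Field K] [CharZero K]
    (nn : Fin p → ℕ) (hn : ∑ j, nn j = n)
    (B : Fin n → Fin p) (hBmono : Monotone B)
    (hBcard : ∀ j, (Finset.univ.filter fun i => B i = j).card = nn j)
    (α β γ δ : Fin n → ℕ) (hα : α ≤ γ) (hβ : β ≤ δ) :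
    ∃ (α₀ β₀ : Fin n → ℕ) (k : ℕ) (a b : Fin k → Fin n → ℕ) (c : Fin k → K),
      (∀ i, c i ≠ 0) ∧
      wMono n K γ δ =
        wMono n K α₀ β₀ * wMono n K α β - ∑ i, c i • wMono n K (a i) (b i) ∧
      (∀ j, ordBlk B α₀ β₀ j + ordBlk B α β j = ordBlk B γ δ j) ∧
      (∀ j, blockSum B α₀ j + blockSum B α j = blockSum B γ j) ∧
      (∀ j, blockSum B β₀ j + blockSum B β j = blockSum B δ j) ∧
      ∀ i, ordTot n (a i) (b i) < ordTot n γ δ ∧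
        (∀ j, ordBlk B (a i) (b i) j ≤ ordBlk B γ δ j) ∧
        ∃ j₀, ordBlk B (a i) (b i) j₀ < ordBlk B γ δ j₀ := by
  classical
  set α₀ : Fin n → ℕ := γ - α with hα₀def
  set β₀ : Fin n → ℕ := δ - β with hβ₀def
  have hγ : α₀ + α = γ := funext fun i => Nat.sub_add_cancel (hα i)
  have hδ : β₀ + β = δ := funext fun i => Nat.sub_add_cancel (hβ i)
  have hγi : ∀ i, α₀ i + α i = γ i := fun i => congrFun hγ i
  have hδi : ∀ i, β₀ i + β i = δ i := fun i => congrFun hδ i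
  obtain ⟨E, hE, hEc⟩ := WeylAux.main n K (∑ i, β₀ i) β₀ α rfl
  have hprod : wMono n K α₀ β₀ * wMono n K α β
      = wMono n K γ δ
        + (E.map fun e => e.2.2 • wMono n K (α₀ + e.1) (e.2.1 + β)).sum := by
    rw [WeylAux.wMono_eq, WeylAux.wMono_eq]
    calc (WeylAux.Xl n K α₀ (List.finRange n) * WeylAux.Dl n K β₀ (List.finRange n))
          * (WeylAux.Xl n K α (List.finRange n) * WeylAux.Dl n K β (List.finRange n))
        = WeylAux.Xl n K α₀ (List.finRange n)
            * ((WeylAux.Dl n K β₀ (List.finRange n) * WeylAux.Xl n K α (List.finRange n))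
                * WeylAux.Dl n K β (List.finRange n)) := by
          noncomm_ring
      _ = WeylAux.Xl n K α₀ (List.finRange n)
            * ((WeylAux.Xl n K α (List.finRange n) * WeylAux.Dl n K β₀ (List.finRange n)
                + (E.map fun e => e.2.2 • (WeylAux.Xl n K e.1 (List.finRange n)
                    * WeylAux.Dl n K e.2.1 (List.finRange n))).sum)
                * WeylAux.Dl n K β (List.finRange n)) := by rw [hE]
      _ = (WeylAux.Xl n K α₀ (List.finRange n) * WeylAux.Xl n K α (List.finRange n))
            * (WeylAux.Dl n K β₀ (List.finRange n) * WeylAux.Dl n K β (List.finRange n))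
          + WeylAux.Xl n K α₀ (List.finRange n)
            * ((E.map fun e => e.2.2 • (WeylAux.Xl n K e.1 (List.finRange n)
                * WeylAux.Dl n K e.2.1 (List.finRange n))).sum
              * WeylAux.Dl n K β (List.finRange n)) := by noncomm_ring
      _ = wMono n K γ δ
          + (E.map fun e => e.2.2 • wMono n K (α₀ + e.1) (e.2.1 + β)).sum := by
          congr 1
          · rw [← WeylAux.Xl_add, ← WeylAux.Dl_add, hγ, hδ, WeylAux.wMono_eq]
          · rw [WeylAux.sum_map_mul_right, WeylAux.mul_sum_map]
            apply WeylAux.sum_map_congr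
            intro e _
            rw [WeylAux.wMono_eq, WeylAux.Xl_add, WeylAux.Dl_add]
            simp only [smul_mul_assoc, mul_smul_comm, mul_assoc]
  have hmain : wMono n K γ δ = wMono n K α₀ β₀ * wMono n K α β
      - (E.map fun e => e.2.2 • wMono n K (α₀ + e.1) (e.2.1 + β)).sum := by
    rw [hprod]; exact (add_sub_cancel_right (wMono n K γ δ) _).symm
  refine ⟨α₀, β₀, E.length,
    fun i => α₀ + (E.get i).1, fun i => (E.get i).2.1 + β, fun i => (E.get i).2.2,
    ?_, ?_, ?_, ?_, ?_, ?_⟩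
  · intro i
    exact (hEc (E.get i) (List.get_mem E i)).1
  · rw [show (∑ i : Fin E.length,
        (E.get i).2.2 • wMono n K (α₀ + (E.get i).1) ((E.get i).2.1 + β))
        = (E.map fun e => e.2.2 • wMono n K (α₀ + e.1) (e.2.1 + β)).sum from
      (Finset.sum_congr rfl fun i _ => rfl).trans
        (WeylAux.fin_sum_list n K E
          (fun e => e.2.2 • wMono n K (α₀ + e.1) (e.2.1 + β)))]
    exact hmain
  · intro j
    unfold ordBlk
    rw [← Finset.sum_add_distrib]
    apply Finset.sum_congr rfl
    intro i _
    have h1 := hγi i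
    have h2 := hδi i
    omega
  · intro j
    unfold blockSum
    rw [← Finset.sum_add_distrib]
    exact Finset.sum_congr rfl fun i _ => hγi i
  · intro j
    unfold blockSum
    rw [← Finset.sum_add_distrib]
    exact Finset.sum_congr rfl fun i _ => hδi i
  · intro i
    dsimp only
    obtain ⟨hc, ha, hb, hlt⟩ := hEc (E.get i) (List.get_mem E i)
    have s1 : ∑ t, (α₀ + (E.get i).1 : Fin n → ℕ) t = (∑ t, α₀ t) + ∑ t, (E.get i).1 t := by
      simp [Pi.add_apply, Finset.sum_add_distrib]
    have s2 : ∑ t, ((E.get i).2.1 + β : Fin n → ℕ) t = (∑ t, (E.get i).2.1 t) + ∑ t, β t := by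
      simp [Pi.add_apply, Finset.sum_add_distrib]
    have s3 : ∑ t, γ t = (∑ t, α₀ t) + ∑ t, α t := by
      rw [← hγ]; simp [Pi.add_apply, Finset.sum_add_distrib]
    have s4 : ∑ t, δ t = (∑ t, β₀ t) + ∑ t, β t := by
      rw [← hδ]; simp [Pi.add_apply, Finset.sum_add_distrib]
    have htot : ordTot n (α₀ + (E.get i).1) ((E.get i).2.1 + β) < ordTot n γ δ := by
      unfold ordTot
      rw [s1, s2, s3, s4]
      omega
    refine ⟨htot, ?_, ?_⟩
    · intro j
      unfold ordBlk
      apply Finset.sum_le_sum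
      intro t _
      have h1 := hγi t
      have h2 := hδi t
      have h3 : (E.get i).1 t ≤ α t := ha t
      have h4 : (E.get i).2.1 t ≤ β₀ t := hb t
      have h5 : (α₀ + (E.get i).1 : Fin n → ℕ) t = α₀ t + (E.get i).1 t := rfl
      have h6 : ((E.get i).2.1 + β : Fin n → ℕ) t = (E.get i).2.1 t + β t := rfl
      omega
    · by_contra hcon
      push_neg at hcon
      have hge : ∑ j, ordBlk B γ δ j ≤ ∑ j, ordBlk B (α₀ + (E.get i).1) ((E.get i).2.1 + β) j :=
        Finset.sum_le_sum fun j _ => hcon j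
      have hfib : ∀ (u v : Fin n → ℕ), ∑ j, ordBlk B u v j = ordTot n u v := by
        intro u v
        unfold ordBlk ordTot
        rw [Finset.sum_fiberwise Finset.univ B fun t => u t + v t]
        rw [Finset.sum_add_distrib]
      rw [hfib, hfib] at hge
      omega
end

section
/- Let K be a field of characteristic zero, A_n(K) the Weyl algebra with a fixed partition of {1,…,n} into blocks of sizes n_1,…,n_p, E a free left A_n(K)-module with free generators e_1,…,e_m, and N an A_n(K)-submodule of E. Then there exists a finite set G = {g_1,…,g_r} ⊆ N which is a Gröbner basis of N with respect to the orders <_1,…,<_p, i.e., for every nonzero f ∈ N there exists g_i ∈ G with ρ(g_i) | ρ(f). -/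
set_option synthInstance.maxHeartbeats 400000
set_option maxHeartbeats 1000000

open MvPolynomial

/-- An exponent pair `(α, β)` encoding the monomial `x^α ∂^β`. -/
abbrev WExp (n : ℕ) := (Fin n → ℕ) × (Fin n → ℕ)

/-- A term `θ e_i` of the free module `E`: a monomial together with the index of a
free generator. -/
abbrev WTerm (n m : ℕ) := WExp n × Fin m

/-- The `j`-th order of a term. -/
def ordT {n p m : ℕ} (B : Fin n → Fin p) (j : Fin p) (t : WTerm n m) : ℕ :=
  ordBlk B t.1.1 t.1.2 j

/-- The comparison vector of a monomial used to define the order `<_j`: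
the `j`-th order, then the other orders, then the exponents of the `j`-th block,
then the remaining exponents. -/
def keyList {n p : ℕ} (B : Fin n → Fin p) (j : Fin p) (t : WExp n) : List ℕ :=
  [ordBlk B t.1 t.2 j] ++
  (((List.finRange p).filter fun k => k ≠ j).map (ordBlk B t.1 t.2)) ++
  (((List.finRange n).filter fun i => B i = j).map t.1) ++
  (((List.finRange n).filter fun i => B i = j).map t.2) ++
  ((((List.finRange n).filter fun i => B i ≠ j).map fun i => [t.1 i, t.2 i]).flatten)

/-- The order `<_j` on monomials. -/
def monLt {n p : ℕ} (B : Fin n → Fin p) (j : Fin p) (s t : WExp n) : Prop :=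
  List.Lex (· < ·) (keyList B j s) (keyList B j t)

/-- The order `<_j` on terms of the free module. -/
def termLt {n p m : ℕ} (B : Fin n → Fin p) (j : Fin p) (s t : WTerm n m) : Prop :=
  monLt B j s.1 t.1 ∨ (s.1 = t.1 ∧ s.2 < t.2)

/-- Divisibility of terms: same free generator and componentwise smaller exponents. -/
def tdvd {n m : ℕ} (s t : WTerm n m) : Prop :=
  s.2 = t.2 ∧ s.1.1 ≤ t.1.1 ∧ s.1.2 ≤ t.1.2

/-- The quotient monomial `t/s` of two terms with `s ∣ t`. -/
def tquot {n m : ℕ} (t s : WTerm n m) : WExp n :=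
  (t.1.1 - s.1.1, t.1.2 - s.1.2)

/-- The element `θ e_i` of the free module `E = A_n(K)^m`. -/
noncomputable def termVal {n m : ℕ} (K : Type) [Field K] (t : WTerm n m) :
    Fin m → WeylAlg n K :=
  Pi.single t.2 (wMono n K t.1.1 t.1.2)

/-- `c` is the coefficient expansion of `f ∈ E` in the basis of terms. -/
def Represents {n m : ℕ} {K : Type} [Field K] (c : WTerm n m →₀ K)
    (f : Fin m → WeylAlg n K) : Prop :=
  f = c.sum fun t a => a • termVal K t

/-- `u` is the `j`-th leader of the element represented by `c`: the greatest term
appearing in it with respect to `<_j`. -/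
def IsLeader {n p m : ℕ} {K : Type} [Field K] (B : Fin n → Fin p) (j : Fin p)
    (c : WTerm n m →₀ K) (u : WTerm n m) : Prop :=
  u ∈ c.support ∧ ∀ t ∈ c.support, t ≠ u → termLt B j t u

/-- `ρ(g) ∣ ρ(f)`, where `u g`, `u f` are the leaders of `g` and `f`:
the first leaders divide and `d_j(g) ≤ d_j(f)` for all `j`. -/
def rhoDvd {n p m : ℕ} (B : Fin n → Fin p) (hp : 0 < p)
    (ug uf : Fin p → WTerm n m) : Prop :=
  tdvd (ug ⟨0, hp⟩) (uf ⟨0, hp⟩) ∧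
  ∀ j, (ordT B j (ug j) : ℤ) - (ordT B j (ug ⟨0, hp⟩) : ℤ) ≤
       (ordT B j (uf j) : ℤ) - (ordT B j (uf ⟨0, hp⟩) : ℤ)

/-- One-step `(<_k, <_{i₁}, …, <_{i_l})`-reduction of `f` to `h` modulo `g`, where `cg`
is the expansion of `g` and `ug j` its `j`-th leader. -/
def RedStep {n p m : ℕ} {K : Type} [Field K] (B : Fin n → Fin p)
    (k : Fin p) (is : List (Fin p))
    (g : Fin m → WeylAlg n K) (cg : WTerm n m →₀ K) (ug : Fin p → WTerm n m)
    (f h : Fin m → WeylAlg n K) : Prop :=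
  ∃ cf : WTerm n m →₀ K, Represents cf f ∧
    ∃ w ∈ cf.support, tdvd (ug k) w ∧
      (∀ i ∈ is, ∀ uf : WTerm n m, IsLeader B i cf uf →
        ordBlk B (tquot w (ug k)).1 (tquot w (ug k)).2 i + ordT B i (ug i) ≤
          ordT B i uf) ∧
      h = f - (cf w * (cg (ug k))⁻¹) •
        fun j => wMono n K (tquot w (ug k)).1 (tquot w (ug k)).2 * g j

/-- The element represented by `cf` is `(<_k, <_{i₁}, …, <_{i_l})`-reduced with respect to an
element with leaders `ug`. -/
def ReducedWrt {n p m : ℕ} {K : Type} [Field K] (B : Fin n → Fin p)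
    (k : Fin p) (is : List (Fin p))
    (cf : WTerm n m →₀ K) (ug : Fin p → WTerm n m) : Prop :=
  ∀ w ∈ cf.support, tdvd (ug k) w →
    ∃ i ∈ is, ∃ uf : WTerm n m, IsLeader B i cf uf ∧
      ordT B i uf <
        ordBlk B (tquot w (ug k)).1 (tquot w (ug k)).2 i + ordT B i (ug i)


/-- Auxiliary: the head of a `List.Lex`-smaller list is `≤` the head of the larger one. -/
lemma lex_head_le' {a b : ℕ} {l1 l2 : List ℕ} (h : List.Lex (· < ·) (a :: l1) (b :: l2)) :
    a ≤ b := by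
  cases h with
  | cons _ => exact le_refl _
  | rel h => exact le_of_lt h

/-- The `j`-th order of any term in the support is at most that of the `j`-th leader. -/
lemma leader_ord_le' {n p m : ℕ} {K : Type} [Field K] (B : Fin n → Fin p) (j : Fin p)
    (c : WTerm n m →₀ K) (u t : WTerm n m) (hu : IsLeader B j c u) (ht : t ∈ c.support) :
    ordT B j t ≤ ordT B j u := by
  by_cases h : t = u
  · exact le_of_eq (by rw [h])
  rcases hu.2 t ht h with hlt | ⟨heq, _⟩
  · exact lex_head_le' hlt
  · exact le_of_eq (by unfold ordT; rw [heq])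

/-- Dickson's lemma: every set of tuples of naturals has a finite dominating-from-below
subset. -/
lemma exists_finite_basis' {ι : Type} [Finite ι] (S : Set (ι → ℕ)) :
    ∃ T : Finset (ι → ℕ), ↑T ⊆ S ∧ ∀ s ∈ S, ∃ t ∈ T, t ≤ s := by
  have hpwo : S.IsPWO :=
    Set.isPWO_of_wellQuasiOrderedLE S
  set M := {x ∈ S | ∀ y ∈ S, ¬ y < x} with hMdef
  have hM : M.Finite := by
    refine IsAntichain.finite_of_partiallyWellOrderedOn (r := (· ≤ ·)) ?_
      (hpwo.mono (fun x hx => hx.1))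
    intro a ha b hb hab hle
    exact hb.2 a ha.1 (lt_of_le_of_ne hle hab)
  refine ⟨hM.toFinset, ?_, ?_⟩
  · intro x hx
    exact (hM.mem_toFinset.mp hx).1
  · intro s hs
    have hwf : {t ∈ S | t ≤ s}.IsWF := hpwo.isWF.mono (fun x hx => hx.1)
    have hne : {t ∈ S | t ≤ s}.Nonempty := ⟨s, hs, le_refl s⟩
    refine ⟨hwf.min hne, ?_, (hwf.min_mem hne).2⟩
    rw [hM.mem_toFinset]
    refine ⟨(hwf.min_mem hne).1, ?_⟩
    intro y hy hlt
    exact hwf.not_lt_min hne ⟨hy, le_of_lt (lt_of_lt_of_le hlt (hwf.min_mem hne).2)⟩ hlt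

/-- The ρ-vector of a family of leaders: generator indicator, exponents of the first
leader, and the differences `dⱼ`. -/
def phiFn' {n p m : ℕ} (B : Fin n → Fin p) (hp : 0 < p) (u : Fin p → WTerm n m) :
    (Fin m ⊕ Fin n ⊕ Fin n ⊕ Fin p) → ℕ
  | .inl i => if (u ⟨0, hp⟩).2 = i then 1 else 0
  | .inr (.inl i) => (u ⟨0, hp⟩).1.1 i
  | .inr (.inr (.inl i)) => (u ⟨0, hp⟩).1.2 i
  | .inr (.inr (.inr j)) => ordT B j (u j) - ordT B j (u ⟨0, hp⟩)

theorem statement_12 (n p m : ℕ) (hp : 0 < p) (K : Type) [Field K] [CharZero K]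
    (nn : Fin p → ℕ) (hn : ∑ j, nn j = n)
    (B : Fin n → Fin p) (hBmono : Monotone B)
    (hBcard : ∀ j, (Finset.univ.filter fun i => B i = j).card = nn j)
    (N : Submodule (WeylAlg n K) (Fin m → WeylAlg n K)) :
    ∃ (r : ℕ) (g : Fin r → Fin m → WeylAlg n K)
      (cg : Fin r → (WTerm n m →₀ K)) (ug : Fin r → Fin p → WTerm n m),
      (∀ i, g i ∈ N) ∧ (∀ i, g i ≠ 0) ∧
      (∀ i, Represents (cg i) (g i)) ∧
      (∀ i j, IsLeader B j (cg i) (ug i j)) ∧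
      ∀ f ∈ N, f ≠ 0 → ∀ (cf : WTerm n m →₀ K) (uf : Fin p → WTerm n m),
        Represents cf f → (∀ j, IsLeader B j cf (uf j)) →
        ∃ i, rhoDvd B hp (ug i) uf := by
  classical
  -- the set of ρ-vectors of nonzero elements of N
  set S : Set ((Fin m ⊕ Fin n ⊕ Fin n ⊕ Fin p) → ℕ) :=
    {v | ∃ (f : Fin m → WeylAlg n K) (cf : WTerm n m →₀ K) (uf : Fin p → WTerm n m),
      f ∈ N ∧ f ≠ 0 ∧ Represents cf f ∧ (∀ j, IsLeader B j cf (uf j)) ∧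
      v = phiFn' B hp uf} with hSdef
  obtain ⟨T, hTS, hTbasis⟩ := exists_finite_basis' S
  have hwit : ∀ i : Fin T.card,
      ∃ (g : Fin m → WeylAlg n K) (cg : WTerm n m →₀ K) (ug : Fin p → WTerm n m),
        g ∈ N ∧ g ≠ 0 ∧ Represents cg g ∧ (∀ j, IsLeader B j cg (ug j)) ∧
        phiFn' B hp ug = (T.equivFin.symm i : (Fin m ⊕ Fin n ⊕ Fin n ⊕ Fin p) → ℕ) := by
    intro i
    have hm : ((T.equivFin.symm i : _) : (Fin m ⊕ Fin n ⊕ Fin n ⊕ Fin p) → ℕ) ∈ S :=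
      hTS (T.equivFin.symm i).2
    obtain ⟨g, cg, ug, h1, h2, h3, h4, h5⟩ := hm
    exact ⟨g, cg, ug, h1, h2, h3, h4, h5.symm⟩
  choose g cg ug hmem hne hrep hld hphi using hwit
  refine ⟨T.card, g, cg, ug, hmem, hne, hrep, hld, ?_⟩
  intro f hf hf0 cf uf hrepf hldf
  have hfS : phiFn' B hp uf ∈ S := ⟨f, cf, uf, hf, hf0, hrepf, hldf, rfl⟩
  obtain ⟨t, htT, hts⟩ := hTbasis _ hfS
  refine ⟨T.equivFin ⟨t, htT⟩, ?_⟩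
  have hle : phiFn' B hp (ug (T.equivFin ⟨t, htT⟩)) ≤ phiFn' B hp uf := by
    rw [hphi (T.equivFin ⟨t, htT⟩), Equiv.symm_apply_apply]
    exact hts
  set i : Fin T.card := T.equivFin ⟨t, htT⟩
  constructor
  · -- tdvd of the first leaders
    have hidx : (uf ⟨0, hp⟩).2 = (ug i ⟨0, hp⟩).2 := by
      have h1 := hle (Sum.inl (ug i ⟨0, hp⟩).2)
      have h2 : phiFn' B hp (ug i) (Sum.inl (ug i ⟨0, hp⟩).2) = 1 := by
        simp [phiFn']
      have h3 : phiFn' B hp uf (Sum.inl (ug i ⟨0, hp⟩).2) =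
          if (uf ⟨0, hp⟩).2 = (ug i ⟨0, hp⟩).2 then 1 else 0 := rfl
      rw [h2, h3] at h1
      by_contra hne'
      rw [if_neg hne'] at h1
      exact absurd h1 (by norm_num)
    refine ⟨hidx.symm, ?_, ?_⟩
    · intro k; exact hle (Sum.inr (Sum.inl k))
    · intro k; exact hle (Sum.inr (Sum.inr (Sum.inl k)))
  · -- the dⱼ inequalities
    intro j
    have hg0 : ordT B j (ug i ⟨0, hp⟩) ≤ ordT B j (ug i j) :=
      leader_ord_le' B j (cg i) (ug i j) (ug i ⟨0, hp⟩) (hld i j) (hld i ⟨0, hp⟩).1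
    have hf0' : ordT B j (uf ⟨0, hp⟩) ≤ ordT B j (uf j) :=
      leader_ord_le' B j cf (uf j) (uf ⟨0, hp⟩) (hldf j) (hldf ⟨0, hp⟩).1
    have hd := hle (Sum.inr (Sum.inr (Sum.inr j)))
    simp only [phiFn'] at hd
    omega
end
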